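/- arXiv:1604.05510 — 5 statements merged into one kernel-verified Lean document; each statement's English description precedes it below -/
import Mathlib

section
/- For every integer h ≥ 3, the persistent reversible pebbling number of the complete binary tree of height h satisfies rev(Bt_h) ≥ h + 2. -/
/-- A system for pebbling: a finite directed tree given by a root and a parent
function (edges are directed from each non-root vertex to its parent, i.e.
toward the root). -/
structure PebSys (V : Type) where
  root : V
  parent : V → V

/-- `T` is a genuine rooted directed tree: the root is a fixed point of the
parent map and every vertex reaches the root by iterating the parent map. -/
def IsRDTree {V : Type} [Fintype V] (T : PebSys V) : Prop :=
  T.parent T.root = T.root ∧ ∀ v : V, ∃ k : ℕ, T.parent^[k] v = T.root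

/-- One legal move of the reversible pebble game, from configuration `P` to
configuration `Q`: exactly one vertex `v` is pebbled or unpebbled, and all
in-neighbours of `v` (vertices `u ≠ v` with `parent u = v`) carry pebbles
in `P`. -/
def PebStep {V : Type} [DecidableEq V] (T : PebSys V) (P Q : Finset V) : Prop :=
  ∃ v : V, ((v ∉ P ∧ Q = insert v P) ∨ (v ∉ Q ∧ P = insert v Q)) ∧
    ∀ u : V, u ≠ v → T.parent u = v → u ∈ P

/-- A persistent reversible pebbling: starts with no pebbles, ends with a
pebble exactly on the root, consecutive configurations are legal moves. -/
def IsPebbling {V : Type} [DecidableEq V] (T : PebSys V) (L : List (Finset V)) : Prop :=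
  L.head? = some ∅ ∧ L.getLast? = some {T.root} ∧ L.Chain' (PebStep T)

/-- A visiting reversible pebbling: starts and ends with no pebbles, and the
root carries a pebble at some point. -/
def IsVisPebbling {V : Type} [DecidableEq V] (T : PebSys V) (L : List (Finset V)) : Prop :=
  L.head? = some ∅ ∧ L.getLast? = some ∅ ∧ (∃ P ∈ L, T.root ∈ P) ∧ L.Chain' (PebStep T)

/-- The space of a pebbling: the maximum number of pebbles in any configuration. -/
def pebSpace {V : Type} (L : List (Finset V)) : ℕ := (L.map Finset.card).foldr max 0

/-- The persistent reversible pebbling number `rev`. -/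
noncomputable def revNum {V : Type} [DecidableEq V] (T : PebSys V) : ℕ :=
  sInf {k | ∃ L : List (Finset V), IsPebbling T L ∧ pebSpace L ≤ k}

/-- The visiting reversible pebbling number `vrev`. -/
noncomputable def vrevNum {V : Type} [DecidableEq V] (T : PebSys V) : ℕ :=
  sInf {k | ∃ L : List (Finset V), IsVisPebbling T L ∧ pebSpace L ≤ k}

/-- The complete binary tree of height `h` (every root-to-leaf path has `h`
nodes), on the `2 ^ h - 1` vertices `0, …, 2 ^ h - 2` in heap order: the root
is `0` and the parent of vertex `i > 0` is `(i - 1) / 2`; all edges are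
directed toward the root. -/
def BtSys (h : ℕ) (hpos : 0 < 2 ^ h - 1) : PebSys (Fin (2 ^ h - 1)) where
  root := ⟨0, hpos⟩
  parent := fun i =>
    ⟨(i.val - 1) / 2, lt_of_le_of_lt (le_trans (Nat.div_le_self _ _) (Nat.sub_le _ _)) i.isLt⟩

namespace RevBtAux

/-- list foldr-max helpers -/
lemma le_foldr_max (l : List ℕ) (a : ℕ) (ha : a ∈ l) : a ≤ l.foldr max 0 := by
  induction l with
  | nil => simp at ha
  | cons b t ih =>
    rcases List.mem_cons.mp ha with rfl | ht
    · exact le_max_left _ _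
    · exact le_trans (ih ht) (le_max_right _ _)

lemma foldr_max_le (l : List ℕ) (m : ℕ) (H : ∀ a ∈ l, a ≤ m) : l.foldr max 0 ≤ m := by
  induction l with
  | nil => simp
  | cons b t ih =>
    simp only [List.foldr_cons]
    exact max_le (H b (by simp)) (ih fun a ha => H a (List.mem_cons_of_mem _ ha))

lemma pebStep_symm {V : Type} [DecidableEq V] (T : PebSys V) {P Q : Finset V}
    (hPQ : PebStep T P Q) : PebStep T Q P := by
  obtain ⟨v, hmove, hch⟩ := hPQ
  rcases hmove with ⟨hv, rfl⟩ | ⟨hv, rfl⟩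
  · exact ⟨v, Or.inr ⟨hv, rfl⟩, fun u hu hp => Finset.mem_insert_of_mem (hch u hu hp)⟩
  · refine ⟨v, Or.inl ⟨hv, rfl⟩, fun u hu hp => ?_⟩
    rcases Finset.mem_insert.mp (hch u hu hp) with h | h
    · exact absurd h hu
    · exact h

/-- turn a list into an eventually-constant configuration function -/
def QF {V : Type} (L : List (Finset V)) : ℕ → Finset V :=
  fun i => L.getD (min i (L.length - 1)) ∅

lemma QF_lazy {V : Type} [DecidableEq V] (T : PebSys V) (L : List (Finset V))
    (hC : L.Chain' (PebStep T)) (i : ℕ) :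
    QF L i = QF L (i + 1) ∨ PebStep T (QF L i) (QF L (i + 1)) := by
  by_cases hi : i < L.length - 1
  · right
    have h1 : min i (L.length - 1) = i := by omega
    have h2 : min (i+1) (L.length - 1) = i + 1 := by omega
    unfold QF
    rw [h1, h2, List.getD_eq_getElem L ∅ (by omega), List.getD_eq_getElem L ∅ (by omega)]
    exact List.isChain_iff_getElem.mp hC i (by omega)
  · left
    have h1 : min i (L.length - 1) = L.length - 1 := by omega
    have h2 : min (i+1) (L.length - 1) = L.length - 1 := by omega
    unfold QF
    rw [h1, h2]

lemma QF_mem {V : Type} (L : List (Finset V)) (hL : L ≠ []) (i : ℕ) : QF L i ∈ L := by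
  have hlen : 0 < L.length := List.length_pos_iff.mpr hL
  have : min i (L.length - 1) < L.length := by omega
  unfold QF
  rw [List.getD_eq_getElem L ∅ this]
  exact List.getElem_mem this

lemma QF_zero {V : Type} (L : List (Finset V)) (P : Finset V) (hL : L.head? = some P) :
    QF L 0 = P := by
  cases L with
  | nil => simp at hL
  | cons a t =>
    simp only [List.head?_cons, Option.some.injEq] at hL
    unfold QF
    simp [hL]

lemma QF_last {V : Type} (L : List (Finset V)) (P : Finset V) (hL : L.getLast? = some P)
    (i : ℕ) (hi : L.length - 1 ≤ i) : QF L i = P := by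
  have hL0 : L ≠ [] := by rintro rfl; simp at hL
  have hlen : 0 < L.length := List.length_pos_iff.mpr hL0
  have h1 : min i (L.length - 1) = L.length - 1 := by omega
  unfold QF
  rw [h1, List.getD_eq_getElem L ∅ (by omega)]
  rw [List.getLast?_eq_getElem?] at hL
  have := List.getElem?_eq_getElem (l := L) (i := L.length - 1) (by omega)
  rw [this] at hL
  exact (Option.some.injEq _ _ ▸ hL).symm ▸ rfl

end RevBtAux
namespace RevBtAux2
open RevBtAux

variable {h : ℕ}

/-- `v` lies in the subtree rooted at `x` (heap order, 1-indexed ancestor test). -/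
def InSub (x v : Fin (2 ^ h - 1)) : Prop := ∃ d : ℕ, (v.val + 1) / 2 ^ d = x.val + 1

instance (x v : Fin (2 ^ h - 1)) : Decidable (InSub x v) := by
  refine decidable_of_iff (∃ d ≤ h, (v.val + 1) / 2 ^ d = x.val + 1)
    ⟨fun ⟨d, _, hd⟩ => ⟨d, hd⟩, fun ⟨d, hd⟩ => ?_⟩
  by_cases hdh : d ≤ h
  · exact ⟨d, hdh, hd⟩
  · exfalso
    have h1 : v.val + 1 < 2 ^ h := by have := v.isLt; omega
    have h2 : (2:ℕ) ^ h ≤ 2 ^ d := Nat.pow_le_pow_right (by norm_num) (by omega)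
    rw [Nat.div_eq_of_lt (by omega)] at hd
    omega

lemma InSub_self (x : Fin (2 ^ h - 1)) : InSub x x := ⟨0, by simp⟩

lemma div_pow_succ (a d : ℕ) : a / 2 ^ d / 2 = a / 2 ^ (d + 1) := by
  rw [Nat.div_div_eq_div_mul, ← pow_succ]

lemma div2_pow_d (a d : ℕ) : a / 2 / 2 ^ d = a / 2 ^ (d + 1) := by
  rw [Nat.div_div_eq_div_mul, ← pow_succ']

/-- subtree of a child is contained in subtree of the parent -/
lemma InSub_mono {x y v : Fin (2 ^ h - 1)}
    (hy : y.val + 1 = 2 * (x.val + 1) ∨ y.val + 1 = 2 * (x.val + 1) + 1)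
    (hv : InSub y v) : InSub x v := by
  obtain ⟨d, hd⟩ := hv
  refine ⟨d + 1, ?_⟩
  rw [← div_pow_succ, hd]
  rcases hy with hy | hy <;> omega

lemma InSub_child {x y : Fin (2 ^ h - 1)}
    (hy : y.val + 1 = 2 * (x.val + 1) ∨ y.val + 1 = 2 * (x.val + 1) + 1) : InSub x y := by
  refine ⟨1, ?_⟩
  rw [pow_one]
  rcases hy with hy | hy <;> omega

lemma div_pow_le_div2 (a e : ℕ) (he : 1 ≤ e) : a / 2 ^ e ≤ a / 2 := by
  obtain ⟨e', rfl⟩ := Nat.exists_eq_add_of_le he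
  rw [add_comm, ← div2_pow_d]
  exact Nat.div_le_self _ _

/-- subtrees of two siblings are disjoint -/
lemma InSub_sibling_disjoint {x y1 y2 v : Fin (2 ^ h - 1)}
    (h1 : y1.val + 1 = 2 * (x.val + 1)) (h2 : y2.val + 1 = 2 * (x.val + 1) + 1)
    (hv1 : InSub y1 v) (hv2 : InSub y2 v) : False := by
  obtain ⟨a, ha⟩ := hv1
  obtain ⟨b, hb⟩ := hv2
  rcases le_total a b with hab | hab
  · obtain ⟨e, rfl⟩ := Nat.exists_eq_add_of_le hab
    rw [pow_add, ← Nat.div_div_eq_div_mul, ha] at hb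
    rcases Nat.eq_zero_or_pos e with rfl | he
    · simp at hb; omega
    · have := div_pow_le_div2 (y1.val + 1) e he
      rw [hb] at this
      omega
  · obtain ⟨e, rfl⟩ := Nat.exists_eq_add_of_le hab
    rw [pow_add, ← Nat.div_div_eq_div_mul, hb] at ha
    rcases Nat.eq_zero_or_pos e with rfl | he
    · simp at ha; omega
    · have := div_pow_le_div2 (y2.val + 1) e he
      rw [ha] at this
      omega

/-- the root (value 0) is in no nontrivial subtree -/
lemma root_not_inSub {x v : Fin (2 ^ h - 1)} (hx : 1 ≤ x.val) (hv : v.val = 0) :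
    ¬ InSub x v := by
  rintro ⟨d, hd⟩
  have : (v.val + 1) / 2 ^ d ≤ 1 := by
    rw [hv]; exact Nat.div_le_self 1 _
  omega

end RevBtAux2

namespace RevBtG
open RevBtAux RevBtAux2

variable {h : ℕ}

/-- **Core lemma.** If the subtree of `x` (of height `j ≥ 2`) carries no pebbles at
time `s` and `x` is pebbled at time `t ≥ s`, then at some intermediate time the subtree
of `x` carries at least `j + 1` pebbles. -/
lemma lemG (hpos : 0 < 2 ^ h - 1) :
    ∀ j : ℕ, 2 ≤ j → j ≤ h → ∀ x : Fin (2 ^ h - 1),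
      2 ^ (h - j) ≤ x.val + 1 → x.val + 1 < 2 ^ (h - j) * 2 →
      ∀ Q : ℕ → Finset (Fin (2 ^ h - 1)),
        (∀ i, Q i = Q (i + 1) ∨ PebStep (BtSys h hpos) (Q i) (Q (i + 1))) →
        ∀ s t : ℕ, s ≤ t → (∀ v ∈ Q s, ¬ InSub x v) → x ∈ Q t →
        ∃ τ, s ≤ τ ∧ τ ≤ t ∧ j + 1 ≤ ((Q τ).filter (fun v => InSub x v)).card := by
  intro j
  induction j using Nat.strong_induction_on with
  | _ j IH =>
  intro hj2 hjh x hx1 hx2 Q hQ s t hst hQs hxt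
  -- basic powers facts
  have e1 : 2 ^ (h - 2) * 2 = 2 ^ (h - 1) := by rw [← pow_succ]; congr 1; omega
  have e2 : 2 ^ (h - 1) * 2 = 2 ^ h := by rw [← pow_succ]; congr 1; omega
  have hle2 : (2:ℕ) ^ (h - j) ≤ 2 ^ (h - 2) := Nat.pow_le_pow_right (by norm_num) (by omega)
  -- the first time ≥ s at which x is pebbled
  have hxs : x ∉ Q s := fun hmem => hQs x hmem (InSub_self x)
  have hex : ∃ τ, s ≤ τ ∧ x ∈ Q τ := ⟨t, hst, hxt⟩
  set t' := Nat.find hex with ht'def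
  obtain ⟨hst', hxt'⟩ := Nat.find_spec hex
  have ht't : t' ≤ t := Nat.find_min' hex ⟨hst, hxt⟩
  have hsne : s ≠ t' := fun he => hxs (he ▸ hxt')
  have hslt : s < t' := lt_of_le_of_ne hst' hsne
  have hxp : x ∉ Q (t' - 1) := by
    intro hmem
    exact Nat.find_min hex (show t' - 1 < t' by omega) ⟨by omega, hmem⟩
  have hstep := hQ (t' - 1)
  rw [show t' - 1 + 1 = t' by omega] at hstep
  rcases hstep with heq | hstep
  · exact absurd (heq ▸ hxt') hxp
  obtain ⟨v, hmove, hchild⟩ := hstep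
  have hvx : v = x := by
    rcases hmove with ⟨hvP, hQe⟩ | ⟨hvQ, hPe⟩
    · rcases Finset.mem_insert.mp (hQe ▸ hxt') with h' | hmem
      · exact h'.symm
      · exact absurd hmem hxp
    · exact absurd (hPe ▸ Finset.mem_insert_of_mem hxt') hxp
  rw [hvx] at hmove hchild
  have hQt' : Q t' = insert x (Q (t' - 1)) := by
    rcases hmove with ⟨hvP, hQe⟩ | ⟨hvQ, hPe⟩
    · exact hQe
    · exact absurd (hPe ▸ Finset.mem_insert_of_mem hxt') hxp
  -- the two children of x
  have hxval : x.val + 1 < 2 ^ (h - 1) := by omega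
  have hb1 : 2 * x.val + 1 < 2 ^ h - 1 := by omega
  have hb2 : 2 * x.val + 2 < 2 ^ h - 1 := by omega
  set y1 : Fin (2 ^ h - 1) := ⟨2 * x.val + 1, hb1⟩ with hy1def
  set y2 : Fin (2 ^ h - 1) := ⟨2 * x.val + 2, hb2⟩ with hy2def
  have hcy1 : y1.val + 1 = 2 * (x.val + 1) := by simp [hy1def]; omega
  have hcy2 : y2.val + 1 = 2 * (x.val + 1) + 1 := by simp [hy2def]; omega
  have hpar : ∀ u : Fin (2 ^ h - 1),
      u.val = 2 * x.val + 1 ∨ u.val = 2 * x.val + 2 → (BtSys h hpos).parent u = x := by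
    intro u hu
    apply Fin.ext
    show (u.val - 1) / 2 = x.val
    rcases hu with hu | hu <;> omega
  have hy1ne : y1 ≠ x := by simp [Fin.ext_iff, hy1def]; omega
  have hy2ne : y2 ≠ x := by simp [Fin.ext_iff, hy2def]; omega
  have hy1P : y1 ∈ Q (t' - 1) := hchild y1 hy1ne (hpar y1 (Or.inl rfl))
  have hy2P : y2 ∈ Q (t' - 1) := hchild y2 hy2ne (hpar y2 (Or.inr rfl))
  have hy1t' : y1 ∈ Q t' := hQt' ▸ Finset.mem_insert_of_mem hy1P
  have hy2t' : y2 ∈ Q t' := hQt' ▸ Finset.mem_insert_of_mem hy2P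
  have hxt'' : x ∈ Q t' := hxt'
  by_cases hj : j = 2
  · -- base case
    subst hj
    refine ⟨t', hst', ht't, ?_⟩
    have hsub : ({x, y1, y2} : Finset (Fin (2 ^ h - 1))) ⊆
        (Q t').filter (fun v => InSub x v) := by
      intro z hz
      simp only [Finset.mem_insert, Finset.mem_singleton] at hz
      rcases hz with rfl | rfl | rfl
      · exact Finset.mem_filter.mpr ⟨hxt'', InSub_self z⟩
      · exact Finset.mem_filter.mpr ⟨hy1t', InSub_child (Or.inl hcy1)⟩
      · exact Finset.mem_filter.mpr ⟨hy2t', InSub_child (Or.inr hcy2)⟩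
    have hne12 : y1 ∉ ({y2} : Finset (Fin (2 ^ h - 1))) := by
      simp [Fin.ext_iff, hy1def, hy2def]
    have hnex : x ∉ ({y1, y2} : Finset (Fin (2 ^ h - 1))) := by
      simp only [Finset.mem_insert, Finset.mem_singleton, Fin.ext_iff, hy1def, hy2def]
      push_neg
      omega
    have hcard : ({x, y1, y2} : Finset (Fin (2 ^ h - 1))).card = 3 := by
      rw [Finset.card_insert_of_notMem hnex, Finset.card_insert_of_notMem hne12,
        Finset.card_singleton]
    calc 2 + 1 = ({x, y1, y2} : Finset (Fin (2 ^ h - 1))).card := hcard.symm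
    _ ≤ _ := Finset.card_le_card hsub
  · -- inductive step : j ≥ 3
    have hj3 : 3 ≤ j := by omega
    have e3 : 2 ^ (h - (j - 1)) = 2 ^ (h - j) * 2 := by rw [← pow_succ]; congr 1; omega
    -- the last times ≤ t' - 1 at which the child subtrees are empty
    have hmono1 : ∀ v, InSub y1 v → InSub x v := fun v hv => InSub_mono (Or.inl hcy1) hv
    have hmono2 : ∀ v, InSub y2 v → InSub x v := fun v hv => InSub_mono (Or.inr hcy2) hv
    set P1 : ℕ → Prop := fun σ => s ≤ σ ∧ ∀ v ∈ Q σ, ¬ InSub y1 v with hP1def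
    set P2 : ℕ → Prop := fun σ => s ≤ σ ∧ ∀ v ∈ Q σ, ¬ InSub y2 v with hP2def
    have hP1s : P1 s := ⟨le_refl s, fun v hv hin => hQs v hv (hmono1 v hin)⟩
    have hP2s : P2 s := ⟨le_refl s, fun v hv hin => hQs v hv (hmono2 v hin)⟩
    have hsle : s ≤ t' - 1 := by omega
    set s1 := Nat.findGreatest P1 (t' - 1) with hs1def
    set s2 := Nat.findGreatest P2 (t' - 1) with hs2def
    have hs1spec : P1 s1 := Nat.findGreatest_spec hsle hP1s
    have hs2spec : P2 s2 := Nat.findGreatest_spec hsle hP2s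
    have hs1le : s1 ≤ t' - 1 := Nat.findGreatest_le _
    have hs2le : s2 ≤ t' - 1 := Nat.findGreatest_le _
    have hs1ge : s ≤ s1 := Nat.le_findGreatest hsle hP1s
    have hs2ge : s ≤ s2 := Nat.le_findGreatest hsle hP2s
    have hs1max : ∀ σ, s1 < σ → σ ≤ t' - 1 → ¬ P1 σ :=
      fun σ a b => Nat.findGreatest_is_greatest a b
    have hs2max : ∀ σ, s2 < σ → σ ≤ t' - 1 → ¬ P2 σ :=
      fun σ a b => Nat.findGreatest_is_greatest a b
    -- symmetric main blocks
    rcases le_total s1 s2 with h12 | h21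
    · -- apply IH to y2's subtree from s2
      obtain ⟨τ, hτ1, hτ2, hτc⟩ := IH (j - 1) (by omega) (by omega) (by omega) y2
        (by rw [e3]; omega) (by rw [e3]; omega) Q hQ s2 (t' - 1) hs2le hs2spec.2 hy2P
      have hτne : s2 ≠ τ := by
        rintro rfl
        have hfe : (Q s2).filter (fun v => InSub y2 v) = ∅ :=
          Finset.filter_eq_empty_iff.mpr (fun {v} hv => hs2spec.2 v hv)
        rw [hfe] at hτc
        simp at hτc
      have hsaτ : s1 < τ := by omega
      have hnP1 : ¬ P1 τ := hs1max τ hsaτ hτ2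
      have hwex : ∃ w ∈ Q τ, InSub y1 w := by
        by_contra hcon
        push_neg at hcon
        exact hnP1 ⟨by omega, hcon⟩
      obtain ⟨w, hwQ, hwIn⟩ := hwex
      have hsubset : insert w ((Q τ).filter (fun v => InSub y2 v)) ⊆
          (Q τ).filter (fun v => InSub x v) := by
        intro z hz
        rcases Finset.mem_insert.mp hz with rfl | hz'
        · exact Finset.mem_filter.mpr ⟨hwQ, hmono1 z hwIn⟩
        · have := Finset.mem_filter.mp hz'
          exact Finset.mem_filter.mpr ⟨this.1, hmono2 z this.2⟩
      have hwnot : w ∉ (Q τ).filter (fun v => InSub y2 v) := by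
        intro hmem
        exact InSub_sibling_disjoint hcy1 hcy2 hwIn (Finset.mem_filter.mp hmem).2
      have hci : (insert w ((Q τ).filter (fun v => InSub y2 v))).card =
          ((Q τ).filter (fun v => InSub y2 v)).card + 1 :=
        Finset.card_insert_of_notMem hwnot
      have := Finset.card_le_card hsubset
      refine ⟨τ, by omega, by omega, by omega⟩
    · -- apply IH to y1's subtree from s1
      obtain ⟨τ, hτ1, hτ2, hτc⟩ := IH (j - 1) (by omega) (by omega) (by omega) y1
        (by rw [e3]; omega) (by rw [e3]; omega) Q hQ s1 (t' - 1) hs1le hs1spec.2 hy1P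
      have hτne : s1 ≠ τ := by
        rintro rfl
        have hfe : (Q s1).filter (fun v => InSub y1 v) = ∅ :=
          Finset.filter_eq_empty_iff.mpr (fun {v} hv => hs1spec.2 v hv)
        rw [hfe] at hτc
        simp at hτc
      have hsaτ : s2 < τ := by omega
      have hnP2 : ¬ P2 τ := hs2max τ hsaτ hτ2
      have hwex : ∃ w ∈ Q τ, InSub y2 w := by
        by_contra hcon
        push_neg at hcon
        exact hnP2 ⟨by omega, hcon⟩
      obtain ⟨w, hwQ, hwIn⟩ := hwex
      have hsubset : insert w ((Q τ).filter (fun v => InSub y1 v)) ⊆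
          (Q τ).filter (fun v => InSub x v) := by
        intro z hz
        rcases Finset.mem_insert.mp hz with rfl | hz'
        · exact Finset.mem_filter.mpr ⟨hwQ, hmono2 z hwIn⟩
        · have := Finset.mem_filter.mp hz'
          exact Finset.mem_filter.mpr ⟨this.1, hmono1 z this.2⟩
      have hwnot : w ∉ (Q τ).filter (fun v => InSub y1 v) := by
        intro hmem
        exact InSub_sibling_disjoint hcy1 hcy2 (Finset.mem_filter.mp hmem).2 hwIn
      have hci : (insert w ((Q τ).filter (fun v => InSub y1 v))).card =
          ((Q τ).filter (fun v => InSub y1 v)).card + 1 :=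
        Finset.card_insert_of_notMem hwnot
      have := Finset.card_le_card hsubset
      refine ⟨τ, by omega, by omega, by omega⟩

end RevBtG

namespace RevBtLow
open RevBtAux RevBtAux2 RevBtG

set_option maxHeartbeats 1000000 in
lemma lower_bound {h : ℕ} (hh : 3 ≤ h) (hpos : 0 < 2 ^ h - 1)
    (L : List (Finset (Fin (2 ^ h - 1)))) (hL : IsPebbling (BtSys h hpos) L) :
    ∃ P ∈ L, h + 2 ≤ P.card := by
  obtain ⟨hhead, hlast, hchain⟩ := hL
  have h8 : (8:ℕ) ≤ 2 ^ h := by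
    calc (8:ℕ) = 2 ^ 3 := by norm_num
    _ ≤ 2 ^ h := Nat.pow_le_pow_right (by norm_num) hh
  set T := BtSys h hpos with hTdef
  set L' := L.reverse with hL'def
  have hchain' : L'.Chain' (PebStep T) :=
    List.isChain_reverse.mpr (hchain.imp fun {a b} hab => pebStep_symm T hab)
  have hhead' : L'.head? = some {T.root} := by
    rw [hL'def, List.head?_reverse]; exact hlast
  have hlast' : L'.getLast? = some ∅ := by
    rw [hL'def, List.getLast?_reverse]; exact hhead
  have hL'ne : L' ≠ [] := by intro he; rw [he] at hhead'; simp at hhead'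
  set Q := QF L' with hQdef
  have hQlazy : ∀ i, Q i = Q (i + 1) ∨ PebStep T (Q i) (Q (i + 1)) :=
    fun i => QF_lazy T L' hchain' i
  have hQ0 : Q 0 = {T.root} := QF_zero L' _ hhead'
  have hQN : Q (L'.length - 1) = ∅ := QF_last L' _ hlast' _ (le_refl _)
  have hroot0 : (T.root).val = 0 := rfl
  -- u = first time the root is unpebbled
  have hexu : ∃ i, T.root ∉ Q i := ⟨L'.length - 1, by rw [hQN]; simp⟩
  set u := Nat.find hexu with hudef
  have hu : T.root ∉ Q u := Nat.find_spec hexu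
  have hmin : ∀ i, i < u → T.root ∈ Q i := by
    intro i hi
    have := Nat.find_min hexu hi
    exact not_not.mp this
  have hu0 : 0 < u := by
    rcases Nat.eq_zero_or_pos u with h0 | h0
    · exfalso; apply hu; rw [h0, hQ0]; simp
    · exact h0
  have hrQu1 : T.root ∈ Q (u - 1) := hmin _ (by omega)
  have hstep := hQlazy (u - 1)
  rw [show u - 1 + 1 = u by omega] at hstep
  rcases hstep with heq | hstep
  · exact absurd (heq ▸ hrQu1) hu
  obtain ⟨v, hmove, hchild⟩ := hstep
  have hvr : v = T.root := by
    rcases hmove with ⟨hvP, hQe⟩ | ⟨hvQ, hPe⟩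
    · exact absurd (hQe ▸ Finset.mem_insert_of_mem hrQu1) hu
    · rcases Finset.mem_insert.mp (hPe ▸ hrQu1) with h' | hmem
      · exact h'.symm
      · exact absurd hmem hu
  rw [hvr] at hchild
  -- the two children of the root
  set c1 : Fin (2 ^ h - 1) := ⟨1, by omega⟩ with hc1def
  set c2 : Fin (2 ^ h - 1) := ⟨2, by omega⟩ with hc2def
  have hc1P : c1 ∈ Q (u - 1) := by
    refine hchild c1 ?_ ?_
    · simp [Fin.ext_iff, hc1def, hroot0]
    · apply Fin.ext
      show (c1.val - 1) / 2 = (T.root).val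
      rw [hroot0]; simp [hc1def]
  have hc2P : c2 ∈ Q (u - 1) := by
    refine hchild c2 ?_ ?_
    · simp [Fin.ext_iff, hc2def, hroot0]
    · apply Fin.ext
      show (c2.val - 1) / 2 = (T.root).val
      rw [hroot0]; simp [hc2def]
  -- the subtrees of c1, c2 are empty at time 0
  have hQ0c1 : ∀ w ∈ Q 0, ¬ InSub c1 w := by
    intro w hw
    rw [hQ0] at hw
    rw [Finset.mem_singleton] at hw
    subst hw
    exact root_not_inSub (by simp [hc1def]) hroot0
  have hQ0c2 : ∀ w ∈ Q 0, ¬ InSub c2 w := by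
    intro w hw
    rw [hQ0] at hw
    rw [Finset.mem_singleton] at hw
    subst hw
    exact root_not_inSub (by simp [hc2def]) hroot0
  have hnr1 : ¬ InSub c1 T.root := root_not_inSub (by simp [hc1def]) hroot0
  have hnr2 : ¬ InSub c2 T.root := root_not_inSub (by simp [hc2def]) hroot0
  have hdisj : ∀ w, InSub c1 w → InSub c2 w → False := by
    intro w hw1 hw2
    refine InSub_sibling_disjoint (x := ⟨0, by omega⟩) ?_ ?_ hw1 hw2
    · simp [hc1def]
    · simp [hc2def]
  -- window facts for lemG at j = h - 1
  have hwin : 2 ^ (h - (h - 1)) = 2 := by rw [show h - (h-1) = 1 by omega, pow_one]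
  -- last times before u - 1 with subtree empty
  set P1 : ℕ → Prop := fun σ => ∀ w ∈ Q σ, ¬ InSub c1 w with hP1def
  set P2 : ℕ → Prop := fun σ => ∀ w ∈ Q σ, ¬ InSub c2 w with hP2def
  set s1 := Nat.findGreatest P1 (u - 1) with hs1def
  set s2 := Nat.findGreatest P2 (u - 1) with hs2def
  have hs1spec : P1 s1 := Nat.findGreatest_spec (Nat.zero_le _) hQ0c1
  have hs2spec : P2 s2 := Nat.findGreatest_spec (Nat.zero_le _) hQ0c2
  have hs1le : s1 ≤ u - 1 := Nat.findGreatest_le _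
  have hs2le : s2 ≤ u - 1 := Nat.findGreatest_le _
  have hs1max : ∀ σ, s1 < σ → σ ≤ u - 1 → ¬ P1 σ :=
    fun σ a b => Nat.findGreatest_is_greatest a b
  have hs2max : ∀ σ, s2 < σ → σ ≤ u - 1 → ¬ P2 σ :=
    fun σ a b => Nat.findGreatest_is_greatest a b
  have hmemL : ∀ τ, Q τ ∈ L := by
    intro τ
    have := QF_mem L' hL'ne τ
    rw [hL'def] at this
    exact List.mem_reverse.mp this
  rcases le_total s1 s2 with h12 | h21
  · -- heavy work inside subtree of c2, extra pebbles: root and inside subtree of c1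
    obtain ⟨τ, hτ1, hτ2, hτc⟩ := lemG hpos (h - 1) (by omega) (by omega) c2
      (by simp [hwin, hc2def]) (by simp [hwin, hc2def]) Q hQlazy s2 (u - 1)
      hs2le hs2spec hc2P
    have hτne : s2 ≠ τ := by
      rintro rfl
      have hfe : (Q s2).filter (fun w => InSub c2 w) = ∅ :=
        Finset.filter_eq_empty_iff.mpr (fun {w} hw => hs2spec w hw)
      rw [hfe] at hτc
      simp at hτc
    have hnP1 : ¬ P1 τ := hs1max τ (by omega) hτ2
    have hwex : ∃ w ∈ Q τ, InSub c1 w := by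
      by_contra hcon
      push_neg at hcon
      exact hnP1 hcon
    obtain ⟨w, hwQ, hwIn⟩ := hwex
    have hrτ : T.root ∈ Q τ := hmin τ (by omega)
    set S := (Q τ).filter (fun z => InSub c2 z) with hSdef
    have hwS : w ∉ S := fun hmem => hdisj w hwIn (Finset.mem_filter.mp hmem).2
    have hrS : T.root ∉ insert w S := by
      intro hmem
      rcases Finset.mem_insert.mp hmem with h' | h'
      · exact hnr1 (h' ▸ hwIn)
      · exact hnr2 (Finset.mem_filter.mp h').2
    have hsubset : insert T.root (insert w S) ⊆ Q τ := by
      intro z hz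
      rcases Finset.mem_insert.mp hz with rfl | hz'
      · exact hrτ
      · rcases Finset.mem_insert.mp hz' with rfl | hz''
        · exact hwQ
        · exact Finset.mem_filter.mp hz'' |>.1
    have hcards : (insert T.root (insert w S)).card = S.card + 2 := by
      rw [Finset.card_insert_of_notMem hrS, Finset.card_insert_of_notMem hwS]
    have hle := Finset.card_le_card hsubset
    exact ⟨Q τ, hmemL τ, by omega⟩
  · obtain ⟨τ, hτ1, hτ2, hτc⟩ := lemG hpos (h - 1) (by omega) (by omega) c1
      (by simp [hwin, hc1def]) (by simp [hwin, hc1def]) Q hQlazy s1 (u - 1)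
      hs1le hs1spec hc1P
    have hτne : s1 ≠ τ := by
      rintro rfl
      have hfe : (Q s1).filter (fun w => InSub c1 w) = ∅ :=
        Finset.filter_eq_empty_iff.mpr (fun {w} hw => hs1spec w hw)
      rw [hfe] at hτc
      simp at hτc
    have hnP2 : ¬ P2 τ := hs2max τ (by omega) hτ2
    have hwex : ∃ w ∈ Q τ, InSub c2 w := by
      by_contra hcon
      push_neg at hcon
      exact hnP2 hcon
    obtain ⟨w, hwQ, hwIn⟩ := hwex
    have hrτ : T.root ∈ Q τ := hmin τ (by omega)
    set S := (Q τ).filter (fun z => InSub c1 z) with hSdef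
    have hwS : w ∉ S := fun hmem => hdisj w (Finset.mem_filter.mp hmem).2 hwIn
    have hrS : T.root ∉ insert w S := by
      intro hmem
      rcases Finset.mem_insert.mp hmem with h' | h'
      · exact hnr2 (h' ▸ hwIn)
      · exact hnr1 (Finset.mem_filter.mp h').2
    have hsubset : insert T.root (insert w S) ⊆ Q τ := by
      intro z hz
      rcases Finset.mem_insert.mp hz with rfl | hz'
      · exact hrτ
      · rcases Finset.mem_insert.mp hz' with rfl | hz''
        · exact hwQ
        · exact Finset.mem_filter.mp hz'' |>.1
    have hcards : (insert T.root (insert w S)).card = S.card + 2 := by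
      rw [Finset.card_insert_of_notMem hrS, Finset.card_insert_of_notMem hwS]
    have hle := Finset.card_le_card hsubset
    exact ⟨Q τ, hmemL τ, by omega⟩

end RevBtLow

namespace RevBtEx
open RevBtAux

set_option maxHeartbeats 1000000 in
lemma exists_pebbling (h : ℕ) (hh : 3 ≤ h) (hpos : 0 < 2 ^ h - 1) :
    ∃ L : List (Finset (Fin (2 ^ h - 1))),
      IsPebbling (BtSys h hpos) L ∧ pebSpace L ≤ 2 ^ h - 1 := by
  have h8 : (8:ℕ) ≤ 2 ^ h := by
    calc (8:ℕ) = 2 ^ 3 := by norm_num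
    _ ≤ 2 ^ h := Nat.pow_le_pow_right (by norm_num) hh
  set T := BtSys h hpos with hTdef
  have hN7 : 7 ≤ 2 ^ h - 1 := by omega
  set E : ℕ → Finset (Fin (2 ^ h - 1)) := fun k =>
    Finset.univ.filter (fun v =>
      (k ≤ (2 ^ h - 1) ∧ (2 ^ h - 1) - k ≤ v.val) ∨ ((2 ^ h - 1) < k ∧ (v.val = 0 ∨ k - (2 ^ h - 1) + 1 ≤ v.val))) with hEdef
  have hmemE : ∀ (k : ℕ) (v : Fin (2 ^ h - 1)), v ∈ E k ↔
      ((k ≤ (2 ^ h - 1) ∧ (2 ^ h - 1) - k ≤ v.val) ∨ ((2 ^ h - 1) < k ∧ (v.val = 0 ∨ k - (2 ^ h - 1) + 1 ≤ v.val))) := by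
    intro k v
    simp [hEdef]
  set L : List (Finset (Fin (2 ^ h - 1))) := (List.range (2 * (2 ^ h - 1))).map E with hLdef
  have hlen : L.length = 2 * (2 ^ h - 1) := by simp [hLdef]
  have hLne : L ≠ [] := by
    intro he
    rw [he] at hlen
    simp at hlen
    omega
  have hgetE : ∀ i, i < 2 * (2 ^ h - 1) → L[i]? = some (E i) := by
    intro i hi
    rw [hLdef, List.getElem?_map, List.getElem?_range hi]
    rfl
  have hhead : L.head? = some ∅ := by
    rw [List.head?_eq_getElem?, hgetE 0 (by omega)]
    congr 1
    rw [Finset.eq_empty_iff_forall_notMem]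
    intro v hv
    rw [hmemE] at hv
    have := v.isLt
    omega
  have hgetLast : L.getLast? = some {T.root} := by
    rw [List.getLast?_eq_getElem?, hlen, hgetE (2 * (2 ^ h - 1) - 1) (by omega)]
    congr 1
    ext v
    rw [hmemE, Finset.mem_singleton]
    have hiff : v = T.root ↔ v.val = 0 :=
      ⟨fun he => congrArg Fin.val he, fun he => Fin.ext he⟩
    rw [hiff]
    have := v.isLt
    omega
  have hchain : L.Chain' (PebStep T) := by
    rw [hLdef]
    rw [show List.Chain' (PebStep T) (List.map E (List.range (2 * (2 ^ h - 1)))) =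
      List.IsChain (PebStep T) (List.map E (List.range (2 * (2 ^ h - 1)))) from rfl, List.isChain_map]
    rw [show 2 * (2 ^ h - 1) = (2 * (2 ^ h - 1) - 1) + 1 by omega, List.isChain_range_succ]
    intro m hm
    by_cases hmN : m < (2 ^ h - 1)
    · -- placing a pebble on vertex (2 ^ h - 1) - 1 - m
      refine ⟨⟨(2 ^ h - 1) - 1 - m, by omega⟩, Or.inl ⟨?_, ?_⟩, ?_⟩
      · rw [hmemE]
        simp only [Fin.val_mk]
        omega
      · ext w
        rw [hmemE, Finset.mem_insert, hmemE, Fin.ext_iff]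
        simp only [Fin.val_mk]
        have := w.isLt
        omega
      · intro u hne hpar
        have hp : (u.val - 1) / 2 = (2 ^ h - 1) - 1 - m := congrArg Fin.val hpar
        have hnv : u.val ≠ (2 ^ h - 1) - 1 - m := by
          intro he
          exact hne (Fin.ext he)
        rw [hmemE]
        have := u.isLt
        omega
    · -- removing the pebble from vertex m - (2 ^ h - 1) + 1
      refine ⟨⟨m - (2 ^ h - 1) + 1, by omega⟩, Or.inr ⟨?_, ?_⟩, ?_⟩
      · rw [hmemE]
        simp only [Fin.val_mk]
        omega
      · ext w
        rw [hmemE, Finset.mem_insert, hmemE, Fin.ext_iff]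
        simp only [Fin.val_mk]
        have := w.isLt
        omega
      · intro u hne hpar
        have hp : (u.val - 1) / 2 = m - (2 ^ h - 1) + 1 := congrArg Fin.val hpar
        have hnv : u.val ≠ m - (2 ^ h - 1) + 1 := by
          intro he
          exact hne (Fin.ext he)
        rw [hmemE]
        have := u.isLt
        omega
  refine ⟨L, ⟨hhead, hgetLast, hchain⟩, ?_⟩
  apply foldr_max_le
  intro a ha
  rw [List.mem_map] at ha
  obtain ⟨P, hP, rfl⟩ := ha
  calc P.card ≤ Finset.univ.card := Finset.card_le_univ P
  _ = (2 ^ h - 1) := by rw [Finset.card_univ, Fintype.card_fin]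

end RevBtEx

/-- For every integer `h ≥ 3`, `rev(Bt_h) ≥ h + 2`. -/
theorem rev_bt_ge_height_add_two (h : ℕ) (hh : 3 ≤ h) :
    h + 2 ≤ revNum (BtSys h
      (by have : 1 < 2 ^ h := Nat.one_lt_two_pow_iff.mpr (by omega); omega)) := by
  have hpos : 0 < 2 ^ h - 1 := by
    have : 1 < 2 ^ h := Nat.one_lt_two_pow_iff.mpr (by omega)
    omega
  show h + 2 ≤ revNum (BtSys h hpos)
  rw [revNum]
  obtain ⟨L0, hL0, hsp⟩ := RevBtEx.exists_pebbling h hh hpos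
  have hne : {k | ∃ L, IsPebbling (BtSys h hpos) L ∧ pebSpace L ≤ k}.Nonempty :=
    ⟨2 ^ h - 1, L0, hL0, hsp⟩
  obtain ⟨L, hL, hle⟩ := Nat.sInf_mem hne
  obtain ⟨P, hPL, hcard⟩ := RevBtLow.lower_bound hh hpos L hL
  have hPs : P.card ≤ pebSpace L :=
    RevBtAux.le_foldr_max _ _ (List.mem_map_of_mem (f := Finset.card) hPL)
  omega
end

section
/- For every positive integer n, the persistent reversible pebbling number of the directed path on n vertices satisfies rev(Ch_n) ≤ ⌈log₂ n⌉ + 1. -/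
/-- The directed path `Ch_n` on `n` vertices `0, …, n - 1`, with all edges
directed toward the end `0`, which is the root (unique sink):
the parent of vertex `i > 0` is `i - 1`. -/
def ChSys (n : ℕ) (hpos : 0 < n) : PebSys (Fin n) where
  root := ⟨0, hpos⟩
  parent := fun i => ⟨i.val - 1, lt_of_le_of_lt (Nat.sub_le _ _) i.isLt⟩

namespace RevChainAux

/-- One step of the segment pebble game on `ℕ` with top bound `b`. -/
def SegStep (b : ℕ) (P Q : Finset ℕ) : Prop :=
  ∃ v, v < b ∧ ((v ∉ P ∧ Q = insert v P) ∨ (v ∉ Q ∧ P = insert v Q)) ∧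
    (v + 1 < b → v + 1 ∈ P)

lemma SegStep.symm {b : ℕ} {P Q : Finset ℕ} (h : SegStep b P Q) : SegStep b Q P := by
  obtain ⟨v, hv, htog, hcond⟩ := h
  refine ⟨v, hv, htog.symm, fun hb => ?_⟩
  have hmem := hcond hb
  rcases htog with ⟨hvP, rfl⟩ | ⟨hvQ, hPe⟩
  · exact Finset.mem_insert_of_mem hmem
  · rw [hPe] at hmem
    rcases Finset.mem_insert.mp hmem with h | h
    · omega
    · exact h

lemma SegStep.insert_out {b w : ℕ} {P Q : Finset ℕ} (h : SegStep b P Q)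
    (hw : w ∉ P) (hw' : w ∉ Q) : SegStep b (insert w P) (insert w Q) := by
  obtain ⟨v, hv, htog, hcond⟩ := h
  refine ⟨v, hv, ?_, fun hb => Finset.mem_insert_of_mem (hcond hb)⟩
  rcases htog with ⟨hvP, rfl⟩ | ⟨hvQ, rfl⟩
  · have hne : w ≠ v := by rintro rfl; exact hw' (Finset.mem_insert_self _ _)
    exact Or.inl ⟨fun hmem => (Finset.mem_insert.mp hmem).elim (fun h => hne h.symm) hvP,
      Finset.insert_comm _ _ _⟩
  · have hne : w ≠ v := by rintro rfl; exact hw (Finset.mem_insert_self _ _)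
    exact Or.inr ⟨fun hmem => (Finset.mem_insert.mp hmem).elim (fun h => hne h.symm) hvQ,
      Finset.insert_comm _ _ _⟩

lemma SegStep.insert_top {k b : ℕ} {P Q : Finset ℕ} (h : SegStep k P Q) (hkb : k < b)
    (hP : k ∉ P) (hQ : k ∉ Q) : SegStep b (insert k P) (insert k Q) := by
  obtain ⟨v, hv, htog, hcond⟩ := h
  have hne : v ≠ k := Nat.ne_of_lt hv
  refine ⟨v, lt_trans hv hkb, ?_, fun hb => ?_⟩
  · rcases htog with ⟨hvP, rfl⟩ | ⟨hvQ, rfl⟩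
    · exact Or.inl ⟨fun hmem => (Finset.mem_insert.mp hmem).elim hne hvP, Finset.insert_comm _ _ _⟩
    · exact Or.inr ⟨fun hmem => (Finset.mem_insert.mp hmem).elim hne hvQ, Finset.insert_comm _ _ _⟩
  · rcases Nat.lt_or_ge (v + 1) k with h1 | h1
    · exact Finset.mem_insert_of_mem (hcond h1)
    · have hvk : v + 1 = k := by omega
      rw [hvk]; exact Finset.mem_insert_self _ _

lemma chain'_mem {α : Type*} {R : α → α → Prop} {p : α → Prop} :
    ∀ {l : List α}, List.Chain' R l → (∀ x ∈ l, p x) →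
      List.Chain' (fun x y => R x y ∧ p x ∧ p y) l
  | [], _, _ => List.isChain_nil
  | a :: l, hc, hp => by
      rw [List.Chain', List.isChain_cons] at hc ⊢
      exact ⟨fun y hy => ⟨hc.1 y hy, hp a (List.mem_cons_self (a := a) (l := l)),
        hp y (List.mem_cons_of_mem a (List.mem_of_mem_head? hy))⟩,
        chain'_mem hc.2 (fun x hx => hp x (List.mem_cons_of_mem a hx))⟩

lemma chain'_glue {α : Type*} {R : α → α → Prop} {l1 l2 : List α}
    (h1 : List.Chain' R l1) (h2 : List.Chain' R l2)
    (h : l1.getLast? = l2.head?) : List.Chain' R (l1 ++ l2.tail) := by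
  match l2 with
  | [] => simpa using h1
  | x :: t =>
      rw [List.Chain', List.isChain_cons] at h2
      rw [List.tail_cons]
      refine h1.append h2.2 ?_
      intro a ha y hy
      rw [h] at ha
      simp only [List.head?_cons, Option.mem_def, Option.some.injEq] at ha
      subst ha
      exact h2.1 y hy

lemma tail_ne_nil {α : Type*} {l : List α} {p q : α}
    (h1 : l.head? = some p) (h2 : l.getLast? = some q) (h : p ≠ q) : l.tail ≠ [] := by
  match l with
  | [] => simp at h1
  | [x] => simp_all
  | x :: y :: t => simp

lemma getLast?_tail' {α : Type*} {l : List α} (h : l.tail ≠ []) :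
    l.tail.getLast? = l.getLast? := by
  match l with
  | [] => simp at h
  | [x] => simp at h
  | x :: y :: t => rw [List.tail_cons, List.getLast?_cons_cons]

lemma pebSpace_le_iff {V : Type} {L : List (Finset V)} {s : ℕ} :
    pebSpace L ≤ s ↔ ∀ P ∈ L, P.card ≤ s := by
  induction L with
  | nil => simp [pebSpace]
  | cons x t ih =>
      simp only [pebSpace, List.map_cons, List.foldr_cons, max_le_iff, List.mem_cons] at ih ⊢
      constructor
      · rintro ⟨ha, hb⟩ P (rfl | hP)
        · exact ha
        · exact ih.mp hb P hP
      · intro h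
        exact ⟨h x (Or.inl rfl), ih.mpr fun P hP => h P (Or.inr hP)⟩

lemma seg_exists : ∀ m : ℕ, 0 < m → ∀ a : ℕ, ∃ L : List (Finset ℕ),
    L.head? = some ∅ ∧ L.getLast? = some {a} ∧ L.Chain' (SegStep (a + m)) ∧
    (∀ P ∈ L, P ⊆ Finset.Ico a (a + m)) ∧ pebSpace L ≤ Nat.clog 2 m + 1 := by
  intro m
  induction m using Nat.strong_induction_on with
  | _ m ih =>
    intro hm a
    by_cases hm1 : m = 1
    · subst hm1
      refine ⟨[∅, {a}], by simp, by simp, ?_, ?_, ?_⟩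
      · rw [List.Chain', List.isChain_pair]
        exact ⟨a, by omega, Or.inl ⟨Finset.notMem_empty a, by simp⟩, by omega⟩
      · intro P hP
        simp only [List.mem_cons, List.not_mem_nil, or_false] at hP
        rcases hP with rfl | rfl
        · simp
        · intro x hx
          simp only [Finset.mem_singleton] at hx
          simp [hx, Finset.mem_Ico]
      · simp [pebSpace, Nat.clog_one_right]
    · have hm2 : 2 ≤ m := by omega
      have hm1pos : 0 < m / 2 := by omega
      have hm2pos : 0 < m - m / 2 := by omega
      obtain ⟨L1, h1h, h1l, h1c, h1s, h1sp⟩ := ih (m - m / 2) (by omega) hm2pos (a + m / 2)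
      obtain ⟨L2, h2h, h2l, h2c, h2s, h2sp⟩ := ih (m / 2) (by omega) hm1pos a
      set k := a + m / 2 with hk
      have hb2 : k + (m - m / 2) = a + m := by omega
      rw [hb2] at h1c h1s
      have hkb : k < a + m := by omega
      -- arithmetic on clog
      set c := Nat.clog 2 m with hc
      have hcpos : 1 ≤ c := Nat.clog_pos one_lt_two hm2
      have hmle : m ≤ 2 ^ c := Nat.le_pow_clog one_lt_two m
      have hpow : 2 ^ (c - 1) * 2 = 2 ^ c := by
        rw [← pow_succ]
        congr 1
        omega
      have hc1 : Nat.clog 2 (m / 2) + 1 ≤ c := by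
        have := (Nat.clog_le_iff_le_pow one_lt_two (x := m / 2) (y := c - 1)).mpr (by omega)
        omega
      have hc2 : Nat.clog 2 (m - m / 2) + 1 ≤ c := by
        have := (Nat.clog_le_iff_le_pow one_lt_two (x := m - m / 2) (y := c - 1)).mpr (by omega)
        omega
      -- non-membership helpers
      have hknot : ∀ P ∈ L2, k ∉ P := by
        intro P hP hkP
        have := h2s P hP hkP
        simp [Finset.mem_Ico] at this
      have hanot : ∀ P ∈ L1, a ∉ P := by
        intro P hP haP
        have := h1s P hP haP
        simp only [Finset.mem_Ico] at this
        omega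
      set mid := L2.map (insert k) with hmid
      set ed := L1.reverse.map (insert a) with hed
      -- chains
      have hcmid : mid.Chain' (SegStep (a + m)) := by
        rw [hmid, List.Chain', List.isChain_map]
        refine (chain'_mem h2c (fun P hP => hP)).imp ?_
        rintro P Q ⟨hstep, hPm, hQm⟩
        exact hstep.insert_top hkb (hknot P hPm) (hknot Q hQm)
      have h1cr : L1.reverse.Chain' (SegStep (a + m)) := by
        rw [List.Chain', List.isChain_reverse]
        exact h1c.imp (fun _ _ h => h.symm)
      have hced : ed.Chain' (SegStep (a + m)) := by
        rw [hed, List.Chain', List.isChain_map]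
        refine (chain'_mem h1cr (fun P hP => List.mem_reverse.mp hP)).imp ?_
        rintro P Q ⟨hstep, hPm, hQm⟩
        exact hstep.insert_out (hanot P hPm) (hanot Q hQm)
      -- head? / getLast? of pieces
      have hmidh : mid.head? = some {k} := by
        rw [hmid, List.head?_map, h2h]; simp
      have hmidl : mid.getLast? = some (insert k {a}) := by
        rw [hmid, List.getLast?_map, h2l]; rfl
      have hedh : ed.head? = some (insert a {k}) := by
        rw [hed, List.head?_map, List.head?_reverse, h1l]; rfl
      have hedl : ed.getLast? = some {a} := by
        rw [hed, List.getLast?_map, List.getLast?_reverse, h1h]; simp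
      have hak : a ≠ k := by omega
      have hne1 : ({k} : Finset ℕ) ≠ insert k {a} := by
        intro h
        have : a ∈ ({k} : Finset ℕ) := h ▸ (by simp)
        simp only [Finset.mem_singleton] at this
        exact hak this
      have hne2 : (insert a {k} : Finset ℕ) ≠ {a} := by
        intro h
        have : k ∈ ({a} : Finset ℕ) := h ▸ (by simp)
        simp only [Finset.mem_singleton] at this
        exact hak this.symm
      have hmidt : mid.tail ≠ [] := tail_ne_nil hmidh hmidl hne1
      have hedt : ed.tail ≠ [] := tail_ne_nil hedh hedl hne2
      have hik : insert k ({a} : Finset ℕ) = insert a {k} := by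
        ext x; simp [or_comm]
      refine ⟨L1 ++ mid.tail ++ ed.tail, ?_, ?_, ?_, ?_, ?_⟩
      · -- head?
        have h1ne : L1 ≠ [] := by
          intro h; rw [h] at h1h; simp at h1h
        rw [List.append_assoc, List.head?_append, List.head?_append, h1h]; rfl
      · -- getLast?
        rw [List.getLast?_append, getLast?_tail' hedt, hedl]; rfl
      · -- chain
        have hG1 : (L1 ++ mid.tail).Chain' (SegStep (a + m)) :=
          chain'_glue h1c hcmid (h1l.trans hmidh.symm)
        have hG1l : (L1 ++ mid.tail).getLast? = some (insert k {a}) := by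
          rw [List.getLast?_append, getLast?_tail' hmidt, hmidl]; rfl
        exact chain'_glue hG1 hced (by rw [hG1l, hedh, hik])
      · -- subset
        intro P hP
        rcases List.mem_append.mp hP with hP | hP
        · rcases List.mem_append.mp hP with hP | hP
          · exact (h1s P hP).trans (Finset.Ico_subset_Ico (by omega) le_rfl)
          · obtain ⟨Q, hQ, rfl⟩ := List.mem_map.mp (List.mem_of_mem_tail hP)
            intro x hx
            rcases Finset.mem_insert.mp hx with rfl | hx
            · simp only [Finset.mem_Ico]; omega
            · have := h2s Q hQ hx
              simp only [Finset.mem_Ico] at this ⊢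
              omega
        · obtain ⟨Q, hQ, rfl⟩ := List.mem_map.mp (List.mem_of_mem_tail hP)
          have hQ' := List.mem_reverse.mp hQ
          intro x hx
          rcases Finset.mem_insert.mp hx with rfl | hx
          · simp only [Finset.mem_Ico]; omega
          · have := h1s Q hQ' hx
            simp only [Finset.mem_Ico] at this ⊢
            omega
      · -- space
        rw [pebSpace_le_iff]
        intro P hP
        rcases List.mem_append.mp hP with hP | hP
        · rcases List.mem_append.mp hP with hP | hP
          · have := pebSpace_le_iff.mp h1sp P hP
            omega
          · obtain ⟨Q, hQ, rfl⟩ := List.mem_map.mp (List.mem_of_mem_tail hP)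
            have hcard := pebSpace_le_iff.mp h2sp Q hQ
            have := Finset.card_insert_le k Q
            omega
        · obtain ⟨Q, hQ, rfl⟩ := List.mem_map.mp (List.mem_of_mem_tail hP)
          have hcard := pebSpace_le_iff.mp h1sp Q (List.mem_reverse.mp hQ)
          have := Finset.card_insert_le a Q
          omega

/-- Transfer a configuration on `ℕ` to one on `Fin n`. -/
def toFin (n : ℕ) (P : Finset ℕ) : Finset (Fin n) :=
  Finset.univ.filter (fun i => (i : ℕ) ∈ P)

lemma mem_toFin {n : ℕ} {P : Finset ℕ} {i : Fin n} : i ∈ toFin n P ↔ (i : ℕ) ∈ P := by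
  simp [toFin]

lemma card_toFin {n : ℕ} {P : Finset ℕ} (h : ∀ x ∈ P, x < n) :
    (toFin n P).card = P.card := by
  have he : toFin n P = P.attachFin h := by
    ext i; simp [mem_toFin, Finset.mem_attachFin]
  rw [he, Finset.card_attachFin]

lemma toFin_step {n : ℕ} (hn : 0 < n) {P Q : Finset ℕ} (h : SegStep n P Q) :
    PebStep (ChSys n hn) (toFin n P) (toFin n Q) := by
  obtain ⟨v, hv, htog, hcond⟩ := h
  refine ⟨⟨v, hv⟩, ?_, ?_⟩
  · rcases htog with ⟨hvP, rfl⟩ | ⟨hvQ, rfl⟩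
    · refine Or.inl ⟨by simp [mem_toFin, hvP], ?_⟩
      ext i
      simp [mem_toFin, Finset.mem_insert, Fin.ext_iff]
    · refine Or.inr ⟨by simp [mem_toFin, hvQ], ?_⟩
      ext i
      simp [mem_toFin, Finset.mem_insert, Fin.ext_iff]
  · intro u hne hpar
    have hpar' : (u : ℕ) - 1 = v := by
      have := congrArg Fin.val hpar
      simpa [ChSys] using this
    have hune : (u : ℕ) ≠ v := fun h => hne (Fin.ext h)
    have huval : (u : ℕ) = v + 1 := by omega
    rw [mem_toFin, huval]
    exact hcond (huval ▸ u.isLt)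

end RevChainAux

/-- For every positive integer `n`,
`rev(Ch_n) ≤ ⌈log₂ n⌉ + 1`. -/
theorem rev_chain_le_clog (n : ℕ) (hn : 0 < n) :
    revNum (ChSys n hn) ≤ Nat.clog 2 n + 1 := by
  obtain ⟨L, hh, hl, hc, hs, hsp⟩ := RevChainAux.seg_exists n hn 0
  rw [zero_add] at hc hs
  apply Nat.sInf_le
  have hlt : ∀ P ∈ L, ∀ x ∈ P, x < n := by
    intro P hP x hx
    have := hs P hP hx
    simp only [Finset.mem_Ico] at this
    exact this.2
  refine ⟨L.map (RevChainAux.toFin n), ⟨?_, ?_, ?_⟩, ?_⟩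
  · rw [List.head?_map, hh]
    have h0 : RevChainAux.toFin n ∅ = ∅ := by
      ext i; simp [RevChainAux.mem_toFin]
    rw [Option.map_some, h0]
  · rw [List.getLast?_map, hl]
    have h0 : RevChainAux.toFin n {0} = {(ChSys n hn).root} := by
      ext i
      simp [RevChainAux.mem_toFin, ChSys, Fin.ext_iff]
    rw [Option.map_some, h0]
  · rw [List.Chain', List.isChain_map]
    refine (RevChainAux.chain'_mem hc (fun P hP => hP)).imp ?_
    rintro P Q ⟨hstep, _, _⟩
    exact RevChainAux.toFin_step hn hstep
  · rw [RevChainAux.pebSpace_le_iff]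
    intro P hP
    obtain ⟨Q, hQ, rfl⟩ := List.mem_map.mp hP
    rw [RevChainAux.card_toFin (hlt Q hQ)]
    exact le_trans (RevChainAux.pebSpace_le_iff.mp hsp Q hQ) le_rfl
end

section
/- There exists an absolute constant C > 0 such that for every real ε with 0 < ε ≤ 1 there is an integer h₀ such that for all h ≥ h₀, the complete binary tree Bt_h admits a reversible pebbling using at most (1 + ε)·h pebbles and at most n^{C · (log₂(1/ε) + 1)} steps, where n = 2^h − 1 is the number of vertices of Bt_h. -/
namespace RevPeb

def pa (x : ℕ) : ℕ := (x - 1) / 2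

def tog (P : Finset ℕ) (v : ℕ) : Finset ℕ := if v ∈ P then P.erase v else insert v P

def appl (P : Finset ℕ) (ms : List ℕ) : Finset ℕ := ms.foldl tog P

def Ok (n : ℕ) (P : Finset ℕ) (v : ℕ) : Prop :=
  v < n ∧ ∀ u, u < n → u ≠ v → pa u = v → u ∈ P

def Valid (n : ℕ) : Finset ℕ → List ℕ → Prop
  | _, [] => True
  | P, v :: ms => Ok n P v ∧ Valid n (tog P v) ms

def spc : Finset ℕ → List ℕ → ℕ
  | P, [] => P.card
  | P, v :: ms => max P.card (spc (tog P v) ms)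

@[simp] lemma appl_nil (P : Finset ℕ) : appl P [] = P := rfl
@[simp] lemma appl_cons (P : Finset ℕ) (v : ℕ) (ms : List ℕ) :
    appl P (v :: ms) = appl (tog P v) ms := rfl
lemma appl_append (P : Finset ℕ) (l₁ l₂ : List ℕ) :
    appl P (l₁ ++ l₂) = appl (appl P l₁) l₂ := List.foldl_append ..

@[simp] lemma valid_nil (n : ℕ) (P : Finset ℕ) : Valid n P [] := trivial
lemma valid_cons {n : ℕ} {P : Finset ℕ} {v : ℕ} {ms : List ℕ} :
    Valid n P (v :: ms) ↔ Ok n P v ∧ Valid n (tog P v) ms := Iff.rfl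

lemma valid_append {n : ℕ} {P : Finset ℕ} {l₁ l₂ : List ℕ} :
    Valid n P (l₁ ++ l₂) ↔ Valid n P l₁ ∧ Valid n (appl P l₁) l₂ := by
  induction l₁ generalizing P with
  | nil => simp
  | cons v t ih => simp [valid_cons, ih, and_assoc]

@[simp] lemma spc_nil (P : Finset ℕ) : spc P [] = P.card := rfl
lemma spc_cons (P : Finset ℕ) (v : ℕ) (ms : List ℕ) :
    spc P (v :: ms) = max P.card (spc (tog P v) ms) := rfl

lemma card_le_spc (P : Finset ℕ) (ms : List ℕ) : P.card ≤ spc P ms := by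
  cases ms with
  | nil => simp
  | cons v t => exact le_max_left _ _

lemma appl_card_le_spc (P : Finset ℕ) (ms : List ℕ) : (appl P ms).card ≤ spc P ms := by
  induction ms generalizing P with
  | nil => simp
  | cons v t ih => exact le_trans (ih (tog P v)) (le_max_right _ _)

lemma spc_append (P : Finset ℕ) (l₁ l₂ : List ℕ) :
    spc P (l₁ ++ l₂) = max (spc P l₁) (spc (appl P l₁) l₂) := by
  induction l₁ generalizing P with
  | nil =>
      simp only [List.nil_append, appl_nil, spc_nil]
      exact (max_eq_right (card_le_spc _ _)).symm
  | cons v t ih =>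
      simp only [List.cons_append, spc_cons, appl_cons, ih, max_assoc]

@[simp] lemma tog_tog (P : Finset ℕ) (v : ℕ) : tog (tog P v) v = P := by
  unfold tog
  by_cases h : v ∈ P
  · simp [h, Finset.insert_erase h]
  · simp [h, Finset.erase_insert h]

lemma mem_tog_of_ne {P : Finset ℕ} {u v : ℕ} (h : u ≠ v) : u ∈ tog P v ↔ u ∈ P := by
  unfold tog
  split <;> simp [h]

lemma ok_tog {n : ℕ} {P : Finset ℕ} {v : ℕ} (h : Ok n P v) : Ok n (tog P v) v := by
  refine ⟨h.1, fun u hu hne hpa => ?_⟩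
  exact (mem_tog_of_ne hne).2 (h.2 u hu hne hpa)

lemma appl_reverse (P : Finset ℕ) (ms : List ℕ) : appl (appl P ms) ms.reverse = P := by
  induction ms generalizing P with
  | nil => simp
  | cons v t ih =>
      simp only [List.reverse_cons, appl_cons, appl_append, ih (tog P v)]
      simp [appl, tog_tog]

lemma valid_reverse {n : ℕ} {P : Finset ℕ} {ms : List ℕ} (h : Valid n P ms) :
    Valid n (appl P ms) ms.reverse := by
  induction ms generalizing P with
  | nil => simp
  | cons v t ih =>
      rcases h with ⟨hok, hval⟩
      simp only [List.reverse_cons, appl_cons]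
      rw [valid_append]
      refine ⟨ih hval, ?_⟩
      rw [appl_reverse]
      exact ⟨ok_tog hok, by simp⟩

lemma spc_reverse (P : Finset ℕ) (ms : List ℕ) :
    spc (appl P ms) ms.reverse ≤ spc P ms := by
  induction ms generalizing P with
  | nil => simp
  | cons v t ih =>
      simp only [List.reverse_cons, appl_cons, spc_append, spc_cons]
      rw [appl_reverse]
      have h1 : spc (appl (tog P v) t) t.reverse ≤ spc (tog P v) t := ih (tog P v)
      have h2 : spc (tog P v) [v] = max (tog P v).card P.card := by
        simp [spc_cons, tog_tog]
      have h3 : (tog P v).card ≤ spc (tog P v) t := card_le_spc _ _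
      simp only [tog_tog, spc_nil]
      omega

lemma tog_union {P E : Finset ℕ} {v : ℕ} (h : v ∉ E) : tog (P ∪ E) v = tog P v ∪ E := by
  unfold tog
  by_cases hv : v ∈ P
  · simp only [Finset.mem_union, hv, true_or, if_true]
    ext x
    by_cases hx : x = v
    · subst hx; simp [h]
    · simp [hx, Finset.mem_erase]
  · have : v ∉ P ∪ E := by simp [hv, h]
    simp only [Finset.mem_union, this, hv, if_neg, if_false]
    ext x
    by_cases hx : x = v
    · subst hx; simp
    · simp [hx]

lemma appl_union {P E : Finset ℕ} {ms : List ℕ} (h : ∀ v ∈ ms, v ∉ E) :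
    appl (P ∪ E) ms = appl P ms ∪ E := by
  induction ms generalizing P with
  | nil => simp
  | cons v t ih =>
      simp only [appl_cons, tog_union (h v (by simp))]
      exact ih fun u hu => h u (by simp [hu])

lemma valid_union {n : ℕ} {P E : Finset ℕ} {ms : List ℕ} (hd : ∀ v ∈ ms, v ∉ E)
    (h : Valid n P ms) : Valid n (P ∪ E) ms := by
  induction ms generalizing P with
  | nil => simp
  | cons v t ih =>
      rcases h with ⟨⟨hvn, hok⟩, hval⟩
      refine ⟨⟨hvn, fun u hu hne hpa => Finset.mem_union_left _ (hok u hu hne hpa)⟩, ?_⟩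
      rw [tog_union (hd v (by simp))]
      exact ih (fun u hu => hd u (by simp [hu])) hval

lemma spc_union {P E : Finset ℕ} {ms : List ℕ} (hd : ∀ v ∈ ms, v ∉ E) :
    spc (P ∪ E) ms ≤ spc P ms + E.card := by
  induction ms generalizing P with
  | nil => simpa using Finset.card_union_le P E
  | cons v t ih =>
      simp only [spc_cons, tog_union (hd v (by simp))]
      have h1 : (P ∪ E).card ≤ P.card + E.card := Finset.card_union_le P E
      have h2 := ih (P := tog P v) (fun u hu => hd u (by simp [hu]))
      omega


/-! ### helpers -/

lemma wsucc (q i : ℕ) : ((q+1)*2^i - 1) + 1 = (q+1)*2^i := by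
  have h1 : 1 ≤ 2^i := Nat.one_le_two_pow
  have : 1 ≤ (q+1)*2^i := le_trans h1 (Nat.le_mul_of_pos_left _ (by omega))
  omega

lemma wmono {q i i' : ℕ} (h : i < i') : (q+1)*2^i < (q+1)*2^i' :=
  (Nat.mul_lt_mul_left (by omega)).mpr (Nat.pow_lt_pow_right (by norm_num) h)

lemma wmono_le {q i i' : ℕ} (h : i ≤ i') : (q+1)*2^i ≤ (q+1)*2^i' :=
  Nat.mul_le_mul_left _ (Nat.pow_le_pow_right (by norm_num) h)

lemma kids_of {u v : ℕ} (hpa : pa u = v) (hne : u ≠ v) : u = 2*v+1 ∨ u = 2*v+2 := by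
  unfold pa at hpa; omega

/-! ### the Bennett path moves -/

def pmov (q : ℕ) : ℕ → ℕ → List ℕ
  | a, b =>
    if b ≤ a + 1 then [(q+1) * 2^a - 1]
    else pmov q ((a+b)/2) b ++ pmov q a ((a+b)/2) ++ (pmov q ((a+b)/2) b).reverse
termination_by a b => b - a
decreasing_by all_goals omega

theorem pmov_spec {h : ℕ} (q j a b : ℕ) (hab : a < b) (hbj : b ≤ j)
    (HL : 2^(h-1) ≤ (q+1) * 2^(j-1)) (HR : (q+2) * 2^(j-1) ≤ 2^h) :
    ∀ P : Finset ℕ,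
      (b < j → (q+1)*2^b - 1 ∈ P) →
      (∀ i, a + 1 ≤ i → i + 1 ≤ j → (q+1)*2^i ∈ P) →
      (∀ i, a ≤ i → i < b → (q+1)*2^i - 1 ∉ P) →
      Valid (2^h - 1) P (pmov q a b) ∧
      appl P (pmov q a b) = insert ((q+1)*2^a - 1) P ∧
      (∀ x ∈ pmov q a b, ∃ i, a ≤ i ∧ i < b ∧ x = (q+1)*2^i - 1) ∧
      (∀ k, b - a ≤ 2^k → spc P (pmov q a b) ≤ P.card + k + 1) := by
  intro P Hsup Hsib Hfr
  have hj : 1 ≤ j := by omega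
  have hjh : j ≤ h := by
    have h1 : (2:ℕ)^j ≤ 2^h := by
      calc (2:ℕ)^j = 2 * 2^(j-1) := by
            rw [← pow_succ']; congr 1; omega
        _ ≤ (q+2) * 2^(j-1) := Nat.mul_le_mul_right _ (by omega)
        _ ≤ 2^h := HR
    exact (Nat.pow_le_pow_iff_right (by norm_num)).mp h1
  rw [pmov]
  split_ifs with hba
  · -- base case : b = a + 1
    have hb : b = a + 1 := by omega
    have hvlt : (q+1)*2^a - 1 < 2^h - 1 := by
      have h1 : (q+1)*2^a ≤ (q+1)*2^(j-1) := wmono_le (by omega)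
      have h2 : (q+1)*2^(j-1) < (q+2)*2^(j-1) := by
        have := Nat.one_le_two_pow (n := j-1); nlinarith
      have := wsucc q a
      omega
    have hok : Ok (2^h - 1) P ((q+1)*2^a - 1) := by
      refine ⟨hvlt, fun u hu hne hpa => ?_⟩
      rcases kids_of hpa hne with hc | hc
      · -- u = 2v+1
        have hp : (q+1)*2^(a+1) = 2*((q+1)*2^a) := by rw [pow_succ]; ring
        have hval : u + 1 = (q+1)*2^(a+1) := by
          have := wsucc q a; omega
        by_cases hbj' : b < j
        · have := Hsup hbj'
          have : u = (q+1)*2^b - 1 := by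
            have := wsucc q b; rw [hb]; omega
          rwa [this]
        · -- b = j : leaf, contradiction with u < n
          exfalso
          have hbj2 : b = j := by omega
          have h1 : (q+1)*2^(a+1) ≥ 2^h := by
            have : (q+1)*2^(a+1) = 2*((q+1)*2^(j-1)) := by
              rw [pow_succ]; have : a = j - 1 := by omega
              subst this; ring
            rw [this]
            calc 2^h = 2*2^(h-1) := by rw [← pow_succ']; congr 1; omega
              _ ≤ 2*((q+1)*2^(j-1)) := by omega
          omega
      · -- u = 2v+2 : sibling
        have hp : (q+1)*2^(a+1) = 2*((q+1)*2^a) := by rw [pow_succ]; ring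
        have hval : u = (q+1)*2^(a+1) := by
          have := wsucc q a; omega
        by_cases hbj' : b < j
        · rw [hval]; exact Hsib (a+1) le_rfl (by omega)
        · exfalso
          have h1 : (q+1)*2^(a+1) ≥ 2^h := by
            have heq : (q+1)*2^(a+1) = 2*((q+1)*2^(j-1)) := by
              rw [pow_succ]; have : a = j - 1 := by omega
              subst this; ring
            rw [heq]
            calc 2^h = 2*2^(h-1) := by rw [← pow_succ']; congr 1; omega
              _ ≤ 2*((q+1)*2^(j-1)) := by omega
          omega
    have hnotmem : (q+1)*2^a - 1 ∉ P := Hfr a le_rfl hab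
    have htog : tog P ((q+1)*2^a - 1) = insert ((q+1)*2^a - 1) P := by
      unfold tog; rw [if_neg hnotmem]
    refine ⟨⟨hok, by simp⟩, by simp [appl, htog], ?_, ?_⟩
    · intro x hx
      simp only [List.mem_singleton] at hx
      exact ⟨a, le_rfl, hab, hx⟩
    · intro k hk
      simp only [spc_cons, spc_nil, htog]
      have := Finset.card_insert_le ((q+1)*2^a - 1) P
      have : (insert ((q+1)*2^a - 1) P).card ≤ P.card + 1 := this
      have hk1 : (1:ℕ) ≤ 2^k := Nat.one_le_two_pow
      omega
  · -- recursive case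
    set c := (a+b)/2 with hc
    have hac : a < c := by omega
    have hcb : c < b := by omega
    obtain ⟨valid1, appl1, sub1, spc1⟩ :=
      pmov_spec (h := h) q j c b hcb hbj HL HR P Hsup
        (fun i hi hij => Hsib i (by omega) hij)
        (fun i hi hib => Hfr i (by omega) hib)
    set wc := (q+1)*2^c - 1 with hwc
    set wa := (q+1)*2^a - 1 with hwa
    set P₁ := insert wc P with hP₁
    have hwane : ∀ i, c ≤ i → (q+1)*2^i - 1 ≠ wa := by
      intro i hi
      have h1 : (q+1)*2^a < (q+1)*2^i := wmono (by omega)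
      have h2 := wsucc q a
      have h3 := wsucc q i
      omega
    obtain ⟨valid2, appl2, sub2, spc2⟩ :=
      pmov_spec (h := h) q j a c hac (by omega) HL HR P₁
        (fun _ => Finset.mem_insert_self _ _)
        (fun i hi hij => Finset.mem_insert_of_mem (Hsib i hi hij))
        (by
          intro i hi hic
          simp only [hP₁, Finset.mem_insert]
          push_neg
          constructor
          · have h1 : (q+1)*2^i < (q+1)*2^c := wmono hic
            have h2 := wsucc q i
            have h3 := wsucc q c
            omega
          · exact Hfr i hi (by omega))
    have hdisj : ∀ v ∈ (pmov q c b).reverse, v ∉ ({wa} : Finset ℕ) := by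
      intro v hv
      rw [List.mem_reverse] at hv
      obtain ⟨i, hi1, _, hi3⟩ := sub1 v hv
      simp only [Finset.mem_singleton]
      rw [hi3]
      exact hwane i hi1
    have hrev_val : Valid (2^h - 1) P₁ (pmov q c b).reverse := by
      have := valid_reverse valid1; rwa [appl1] at this
    have hrev_app : appl P₁ (pmov q c b).reverse = P := by
      have := appl_reverse P (pmov q c b); rwa [appl1] at this
    have valid3 : Valid (2^h - 1) (P₁ ∪ {wa}) (pmov q c b).reverse :=
      valid_union hdisj hrev_val
    have appl3 : appl (P₁ ∪ {wa}) (pmov q c b).reverse = P ∪ {wa} := by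
      rw [appl_union hdisj, hrev_app]
    have hins1 : insert wa P₁ = P₁ ∪ {wa} := by
      rw [Finset.union_comm, ← Finset.insert_eq]
    have hins2 : P ∪ {wa} = insert wa P := by
      rw [Finset.union_comm, ← Finset.insert_eq]
    have happl_total :
        appl P (pmov q c b ++ pmov q a c ++ (pmov q c b).reverse) = insert wa P := by
      rw [appl_append, appl_append, appl1, appl2, hins1, appl3, hins2]
    refine ⟨?_, happl_total, ?_, ?_⟩
    · rw [valid_append, valid_append, appl_append, appl1, appl2, hins1]
      exact ⟨⟨valid1, valid2⟩, valid3⟩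
    · intro x hx
      simp only [List.mem_append, List.mem_reverse] at hx
      rcases hx with (hx | hx) | hx
      · obtain ⟨i, h1, h2, h3⟩ := sub1 x hx; exact ⟨i, by omega, by omega, h3⟩
      · obtain ⟨i, h1, h2, h3⟩ := sub2 x hx; exact ⟨i, by omega, by omega, h3⟩
      · obtain ⟨i, h1, h2, h3⟩ := sub1 x hx; exact ⟨i, by omega, by omega, h3⟩
    · intro k hk
      have hk1 : 1 ≤ k := by
        rcases Nat.eq_zero_or_pos k with h0 | h1
        · subst h0; simp at hk; omega
        · exact h1
      have h2e : 2^k = 2 * 2^(k-1) := by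
        rw [← pow_succ']; congr 1; omega
      have hbce : b - c ≤ 2^(k-1) := by omega
      have hcae : c - a ≤ 2^(k-1) := by omega
      have s1 := spc1 (k-1) hbce
      have s2 := spc2 (k-1) hcae
      have s3 : spc (insert wa P₁) (pmov q c b).reverse ≤ P.card + (k-1) + 2 := by
        rw [hins1]
        have h1 := spc_union (P := P₁) hdisj
        have h2 : spc P₁ (pmov q c b).reverse ≤ spc P (pmov q c b) := by
          have := spc_reverse P (pmov q c b); rwa [appl1] at this
        have h3 := spc1 (k-1) hbce
        simp only [Finset.card_singleton] at h1
        omega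
      rw [spc_append, spc_append, appl_append, appl1, appl2, ← hwa]
      have hcard : P₁.card ≤ P.card + 1 := Finset.card_insert_le _ _
      omega
termination_by b - a
decreasing_by all_goals omega

/-! ### the tree moves -/

def InM (q j m x : ℕ) : Prop :=
  (∃ i, i < j ∧ x + 1 = (q+1)*2^i) ∨
  (∃ t, t < m ∧ (q+1)*2^(j-1)*2^t ≤ x + 1 ∧ x + 1 < ((q+1)*2^(j-1)+1)*2^t)

def mov : ℕ → ℕ → ℕ → List ℕ
  | q, j, 0 => pmov q 0 j
  | q, j, 1 => pmov q 0 j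
  | q, j, (m+2) =>
      mov ((q+1)*2^j) 1 (m+1) ++ mov q (j+1) (m+1) ++ (mov ((q+1)*2^j) 1 (m+1)).reverse

lemma pow_split (j : ℕ) (hj : 1 ≤ j) : (2:ℕ)^j = 2^(j-1) * 2 := by
  rw [← pow_succ]; congr 1; omega

lemma InM_A_sub {q j m x : ℕ} (hj : 1 ≤ j) (hm : 1 ≤ m)
    (hx : InM ((q+1)*2^j) 1 m x) : InM q j (m+1) x := by
  have e1 : (2:ℕ)^j = 2^(j-1)*2 := pow_split j hj
  have eA : (q+1)*2^(j-1)*2^1 = (q+1)*2^j := by rw [e1]; ring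
  have eB : ((q+1)*2^(j-1)+1)*2^1 = (q+1)*2^j + 2 := by rw [e1]; ring
  rcases hx with ⟨i, hi, hxe⟩ | ⟨t, ht, lo, hi⟩
  · have hi0 : i = 0 := by omega
    subst hi0
    simp only [pow_zero, mul_one] at hxe
    exact Or.inr ⟨1, by omega, by omega, by omega⟩
  · simp only [show (1:ℕ)-1 = 0 from rfl, pow_zero, mul_one] at lo hi
    refine Or.inr ⟨t+1, by omega, ?_, ?_⟩
    · have e2 : (q+1)*2^(j-1)*2^(t+1) = (q+1)*2^j*2^t := by
        rw [e1, pow_succ]; ring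
      have h3 : (q+1)*2^j*2^t ≤ ((q+1)*2^j+1)*2^t :=
        Nat.mul_le_mul (by omega) (le_refl (2^t))
      omega
    · have e3 : ((q+1)*2^(j-1)+1)*2^(t+1) = ((q+1)*2^j+2)*2^t := by
        rw [e1, pow_succ]; ring
      have e5 : ((q+1)*2^j+1+1)*2^t = ((q+1)*2^j+2)*2^t := by ring
      omega

lemma InM_B_sub {q j m x : ℕ} (hj : 1 ≤ j) (hm : 1 ≤ m)
    (hx : InM q (j+1) m x) : InM q j (m+1) x := by
  have e1 : (2:ℕ)^j = 2^(j-1)*2 := pow_split j hj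
  have eA : (q+1)*2^(j-1)*2^1 = (q+1)*2^j := by rw [e1]; ring
  have eB : ((q+1)*2^(j-1)+1)*2^1 = (q+1)*2^j + 2 := by rw [e1]; ring
  rcases hx with ⟨i, hi, hxe⟩ | ⟨t, ht, lo, hi⟩
  · rcases Nat.lt_or_ge i j with h | h
    · exact Or.inl ⟨i, h, hxe⟩
    · have hij : i = j := by omega
      subst hij
      exact Or.inr ⟨1, by omega, by omega, by omega⟩
  · have ej : j + 1 - 1 = j := by omega
    rw [ej] at lo hi
    refine Or.inr ⟨t+1, by omega, ?_, ?_⟩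
    · have e2 : (q+1)*2^(j-1)*2^(t+1) = (q+1)*2^j*2^t := by
        rw [e1, pow_succ]; ring
      omega
    · have e3 : ((q+1)*2^(j-1)+1)*2^(t+1) = ((q+1)*2^j+2)*2^t := by
        rw [e1, pow_succ]; ring
      have h3 : ((q+1)*2^j+1)*2^t ≤ ((q+1)*2^j+2)*2^t :=
        Nat.mul_le_mul (by omega) (le_refl (2^t))
      omega

lemma two_le_pow {j : ℕ} (hj : 1 ≤ j) : (2:ℕ) ≤ 2^j := by
  calc (2:ℕ) = 2^1 := (pow_one 2).symm
  _ ≤ 2^j := Nat.pow_le_pow_right (by norm_num) hj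

lemma q'_notin_B {q j m : ℕ} (hj : 1 ≤ j) : ¬ InM q (j+1) m ((q+1)*2^j) := by
  intro hx
  have h2 : (2:ℕ) ≤ 2^j := two_le_pow hj
  have h4 : 2 ≤ (q+1)*2^j := le_trans h2 (Nat.le_mul_of_pos_left _ (by omega))
  rcases hx with ⟨i, hi, hxe⟩ | ⟨t, ht, lo, hi⟩
  · have : (q+1)*2^i ≤ (q+1)*2^j := wmono_le (by omega)
    omega
  · have ej : j + 1 - 1 = j := by omega
    rw [ej] at lo hi
    rcases t with _ | t
    · simp only [pow_zero, mul_one] at lo hi; omega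
    · have e2 : (q+1)*2^j*2^(t+1) = 2*((q+1)*2^j)*2^t := by rw [pow_succ]; ring
      have h3 : 2*((q+1)*2^j) ≤ 2*((q+1)*2^j)*2^t :=
        Nat.le_mul_of_pos_right _ (by positivity)
      omega

lemma q'_in_parent {q j m : ℕ} (hj : 1 ≤ j) (hm : 2 ≤ m) : InM q j m ((q+1)*2^j) := by
  have e1 : (2:ℕ)^j = 2^(j-1)*2 := pow_split j hj
  have eA : (q+1)*2^(j-1)*2^1 = (q+1)*2^j := by rw [e1]; ring
  have eB : ((q+1)*2^(j-1)+1)*2^1 = (q+1)*2^j + 2 := by rw [e1]; ring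
  exact Or.inr ⟨1, by omega, by omega, by omega⟩

lemma gt_of_InM_A {q j m x : ℕ} (hj : 1 ≤ j) (hx : InM ((q+1)*2^j) 1 m x) : q < x := by
  have h2 : (2:ℕ) ≤ 2^j := two_le_pow hj
  have hq' : q + 2 ≤ (q+1)*2^j := by nlinarith
  rcases hx with ⟨i, hi, hxe⟩ | ⟨t, ht, lo, hi⟩
  · have hi0 : i = 0 := by omega
    subst hi0; simp only [pow_zero, mul_one] at hxe; omega
  · simp only [show (1:ℕ)-1 = 0 from rfl, pow_zero, mul_one] at lo
    have h1 : (1:ℕ) ≤ 2^t := Nat.one_le_two_pow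
    have h3 : (q+1)*2^j + 1 ≤ ((q+1)*2^j+1)*2^t := Nat.le_mul_of_pos_right _ (by omega)
    omega

theorem mov_spec {h : ℕ} (m : ℕ) : ∀ (q j : ℕ), 1 ≤ j → 1 ≤ m →
    2^(h-1) ≤ (q+1) * 2^(j+m-2) → (q+2) * 2^(j+m-2) ≤ 2^h →
    ∀ P : Finset ℕ,
      (∀ i, 1 ≤ i → i < j → (q+1)*2^i ∈ P) →
      (∀ x, InM q j m x → x ∉ P) →
      Valid (2^h-1) P (mov q j m) ∧
      appl P (mov q j m) = insert q P ∧
      (∀ x ∈ mov q j m, InM q j m x) ∧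
      spc P (mov q j m) ≤ P.card + m + Nat.log 2 h + 2 := by
  induction m using Nat.strong_induction_on with
  | _ m ih =>
  intro q j hj hm HL HR P Hsib Hfr
  rcases m with _ | _ | m
  · omega
  · -- m = 1 : pure path
    have hE : j + 1 - 2 = j - 1 := by omega
    rw [hE] at HL HR
    have hmov1 : mov q j (0+1) = pmov q 0 j := rfl
    rw [hmov1]
    obtain ⟨v1, a1, s1, c1⟩ :=
      pmov_spec (h := h) q j 0 j (by omega) le_rfl HL HR P
        (fun hlt => absurd hlt (lt_irrefl j))
        (fun i hi hij => Hsib i hi (by omega))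
        (fun i _ hij => Hfr _ (Or.inl ⟨i, hij, wsucc q i⟩))
    have hq0 : (q+1)*2^0 - 1 = q := by simp
    refine ⟨v1, by rwa [hq0] at a1, ?_, ?_⟩
    · intro x hx
      obtain ⟨i, _, h2, h3⟩ := s1 x hx
      exact Or.inl ⟨i, h2, by rw [h3]; exact wsucc q i⟩
    · have hjh : j ≤ h := by
        have h1 : (2:ℕ)^j ≤ 2^h := by
          calc (2:ℕ)^j = 2 * 2^(j-1) := by rw [pow_split j hj]; ring
          _ ≤ (q+2) * 2^(j-1) := Nat.mul_le_mul_right _ (by omega)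
          _ ≤ 2^h := HR
        exact (Nat.pow_le_pow_iff_right (by norm_num)).mp h1
      have hlog : j - 0 ≤ 2^(Nat.log 2 h + 1) := by
        have := Nat.lt_pow_succ_log_self (by norm_num : 1 < 2) h
        omega
      have := c1 (Nat.log 2 h + 1) hlog
      omega
  · -- m + 2 : recursive case
    have hmm : j + (m+1+1) - 2 = j + m := by omega
    rw [hmm] at HL HR
    set q' := (q+1)*2^j with hq'
    have epow : (q+1) * 2^(j+m) = (q+1)*2^j*2^m := by rw [pow_add]; ring
    have h2j : (2:ℕ) ≤ 2^j := two_le_pow hj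
    have h1m : (1:ℕ) ≤ 2^m := Nat.one_le_two_pow
    -- A : pers-pebble q'
    have HL_A : 2^(h-1) ≤ (q'+1) * 2^(1+(m+1)-2) := by
      have e : 1+(m+1)-2 = m := by omega
      rw [e, hq']
      calc 2^(h-1) ≤ (q+1)*2^(j+m) := HL
      _ = (q+1)*2^j*2^m := epow
      _ ≤ ((q+1)*2^j+1)*2^m := Nat.mul_le_mul (by omega) (le_refl (2^m))
    have HR_A : (q'+2) * 2^(1+(m+1)-2) ≤ 2^h := by
      have e : 1+(m+1)-2 = m := by omega
      rw [e, hq']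
      have e2 : ((q+1)*2^j+2)*2^m = (q+1)*2^(j+m) + 2*2^m := by rw [pow_add]; ring
      have e3 : (q+2)*2^(j+m) = (q+1)*2^(j+m) + 2^(j+m) := by ring
      have e4 : 2*2^m ≤ 2^(j+m) := by
        rw [pow_add]
        exact Nat.mul_le_mul h2j (le_refl (2^m))
      omega
    obtain ⟨vA, aA, sA, cA⟩ :=
      ih (m+1) (by omega) q' 1 le_rfl (by omega) HL_A HR_A P
        (fun i hi hij => absurd hij (by omega))
        (fun x hx => Hfr x (InM_A_sub hj (by omega) hx))
    set P₁ := insert q' P with hP₁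
    have hq'P : q' ∉ P := Hfr q' (q'_in_parent hj (by omega))
    have hcard1 : P₁.card = P.card + 1 := Finset.card_insert_of_notMem hq'P
    -- B : pers-pebble q with longer spine
    obtain ⟨vB, aB, sB, cB⟩ :=
      ih (m+1) (by omega) q (j+1) (by omega) (by omega)
        (by rw [show j+1+(m+1)-2 = j+m by omega]; exact HL)
        (by rw [show j+1+(m+1)-2 = j+m by omega]; exact HR) P₁
        (by
          intro i hi hij
          rcases Nat.lt_or_ge i j with hlt | hge
          · exact Finset.mem_insert_of_mem (Hsib i hi hlt)
          · have hij' : i = j := by omega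
            subst hij'
            exact Finset.mem_insert_self _ _)
        (by
          intro x hx
          simp only [hP₁, Finset.mem_insert]
          push_neg
          refine ⟨?_, Hfr x (InM_B_sub hj (by omega) hx)⟩
          intro hxq
          rw [hxq] at hx
          exact q'_notin_B hj hx)
    -- C : reverse of A with q held
    have hdisj : ∀ v ∈ (mov q' 1 (m+1)).reverse, v ∉ ({q} : Finset ℕ) := by
      intro v hv
      rw [List.mem_reverse] at hv
      have := gt_of_InM_A hj (sA v hv)
      simp only [Finset.mem_singleton]
      omega
    have hrev_val : Valid (2^h-1) P₁ (mov q' 1 (m+1)).reverse := by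
      have := valid_reverse vA; rwa [aA] at this
    have hrev_app : appl P₁ (mov q' 1 (m+1)).reverse = P := by
      have := appl_reverse P (mov q' 1 (m+1)); rwa [aA] at this
    have vC : Valid (2^h-1) (P₁ ∪ {q}) (mov q' 1 (m+1)).reverse :=
      valid_union hdisj hrev_val
    have aC : appl (P₁ ∪ {q}) (mov q' 1 (m+1)).reverse = P ∪ {q} := by
      rw [appl_union hdisj, hrev_app]
    have hins1 : insert q P₁ = P₁ ∪ {q} := by rw [Finset.union_comm, ← Finset.insert_eq]
    have hins2 : P ∪ {q} = insert q P := by rw [Finset.union_comm, ← Finset.insert_eq]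
    have hmov : mov q j (m+1+1) =
        mov q' 1 (m+1) ++ mov q (j+1) (m+1) ++ (mov q' 1 (m+1)).reverse := rfl
    rw [hmov]
    refine ⟨?_, ?_, ?_, ?_⟩
    · rw [valid_append, valid_append, appl_append, aA, aB, hins1]
      exact ⟨⟨vA, vB⟩, vC⟩
    · rw [appl_append, appl_append, aA, aB, hins1, aC, hins2]
    · intro x hx
      simp only [List.mem_append, List.mem_reverse] at hx
      rcases hx with (hx | hx) | hx
      · exact InM_A_sub hj (by omega) (sA x hx)
      · exact InM_B_sub hj (by omega) (sB x hx)
      · exact InM_A_sub hj (by omega) (sA x hx)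
    · rw [spc_append, spc_append, appl_append, aA, aB, hins1]
      have s3 : spc (P₁ ∪ {q}) (mov q' 1 (m+1)).reverse ≤ P.card + (m+1) + Nat.log 2 h + 3 := by
        have h1 := spc_union (P := P₁) hdisj
        have h2 : spc P₁ (mov q' 1 (m+1)).reverse ≤ spc P (mov q' 1 (m+1)) := by
          have := spc_reverse P (mov q' 1 (m+1)); rwa [aA] at this
        simp only [Finset.card_singleton] at h1
        omega
      omega

/-! ### configuration lists -/

def StepN (n : ℕ) (P Q : Finset ℕ) : Prop :=
  ∃ v, v < n ∧ ((v ∉ P ∧ Q = insert v P) ∨ (v ∉ Q ∧ P = insert v Q)) ∧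
    ∀ u, u < n → u ≠ v → pa u = v → u ∈ P

def confs : Finset ℕ → List ℕ → List (Finset ℕ)
  | P, [] => [P]
  | P, v :: ms => P :: confs (tog P v) ms

lemma confs_shape (P : Finset ℕ) (ms : List ℕ) : ∃ l, confs P ms = P :: l := by
  cases ms <;> exact ⟨_, rfl⟩

lemma confs_head (P : Finset ℕ) (ms : List ℕ) : (confs P ms).head? = some P := by
  obtain ⟨l, hl⟩ := confs_shape P ms
  rw [hl]; rfl

lemma confs_length (P : Finset ℕ) (ms : List ℕ) :
    (confs P ms).length = ms.length + 1 := by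
  induction ms generalizing P with
  | nil => rfl
  | cons v t ih => simp [confs, ih]

lemma stepN_tog {n : ℕ} {P : Finset ℕ} {v : ℕ} (h : Ok n P v) : StepN n P (tog P v) := by
  refine ⟨v, h.1, ?_, h.2⟩
  unfold tog
  by_cases hv : v ∈ P
  · rw [if_pos hv]
    exact Or.inr ⟨Finset.notMem_erase _ _, (Finset.insert_erase hv).symm⟩
  · rw [if_neg hv]
    exact Or.inl ⟨hv, rfl⟩

lemma confs_chain {n : ℕ} {P : Finset ℕ} {ms : List ℕ} (h : Valid n P ms) :
    List.Chain' (StepN n) (confs P ms) := by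
  induction ms generalizing P with
  | nil => exact List.isChain_singleton _
  | cons v t ih =>
      rcases h with ⟨hok, hval⟩
      show List.Chain' (StepN n) (P :: confs (tog P v) t)
      rw [List.Chain', List.isChain_cons]
      refine ⟨?_, ih hval⟩
      intro y hy
      rw [confs_head] at hy
      cases hy
      exact stepN_tog hok

lemma confs_map_getLast? {α : Type*} (f : Finset ℕ → α) (P : Finset ℕ) (ms : List ℕ) :
    ((confs P ms).map f).getLast? = some (f (appl P ms)) := by
  induction ms generalizing P with
  | nil => rfl
  | cons v t ih =>
      obtain ⟨l, hl⟩ := confs_shape (tog P v) t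
      show ((P :: confs (tog P v) t).map f).getLast? = _
      rw [hl]
      simp only [List.map_cons, List.getLast?_cons_cons]
      rw [← List.map_cons (f := f) (a := tog P v) (l := l), ← hl, ih]
      rfl

lemma confs_foldr (P : Finset ℕ) (ms : List ℕ) :
    ((confs P ms).map Finset.card).foldr max 0 = spc P ms := by
  induction ms generalizing P with
  | nil => simp [confs]
  | cons v t ih =>
      show (P.card :: (confs (tog P v) t).map Finset.card).foldr max 0 = _
      simp only [List.foldr_cons, ih, spc_cons]

lemma tog_mem_lt {P : Finset ℕ} {v n : ℕ} (hP : ∀ x ∈ P, x < n) (hv : v < n) :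
    ∀ x ∈ tog P v, x < n := by
  intro x hx
  unfold tog at hx
  split at hx
  · exact hP x (Finset.mem_of_mem_erase hx)
  · rcases Finset.mem_insert.mp hx with hxx | hxx
    · omega
    · exact hP x hxx

lemma confs_mem_lt {n : ℕ} {P : Finset ℕ} {ms : List ℕ} (h : Valid n P ms)
    (hP : ∀ x ∈ P, x < n) : ∀ Q ∈ confs P ms, ∀ x ∈ Q, x < n := by
  induction ms generalizing P with
  | nil =>
      intro Q hQ
      simp only [confs, List.mem_singleton] at hQ
      subst hQ; exact hP
  | cons v t ih =>
      rcases h with ⟨hok, hval⟩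
      intro Q hQ
      rcases List.mem_cons.mp hQ with hQ1 | hQ2
      · subst hQ1; exact hP
      · exact ih hval (tog_mem_lt hP hok.1) Q hQ2

/-! ### transfer to Fin -/

def Fn (n : ℕ) (S : Finset ℕ) : Finset (Fin n) :=
  Finset.univ.filter (fun i => i.val ∈ S)

lemma mem_Fn {n : ℕ} {S : Finset ℕ} (i : Fin n) : i ∈ Fn n S ↔ i.val ∈ S := by
  simp [Fn]

lemma Fn_card {n : ℕ} {S : Finset ℕ} (hS : ∀ x ∈ S, x < n) : (Fn n S).card = S.card := by
  have he : Fn n S = S.attachFin hS := by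
    ext i; simp [Fn, Finset.mem_attachFin]
  rw [he, Finset.card_attachFin]

lemma Fn_empty (n : ℕ) : Fn n ∅ = ∅ := by
  ext i; simp [Fn]

lemma Fn_insert {n : ℕ} {S : Finset ℕ} {v : ℕ} (hv : v < n) :
    Fn n (insert v S) = insert (⟨v, hv⟩ : Fin n) (Fn n S) := by
  ext i
  simp only [mem_Fn, Finset.mem_insert, Fin.ext_iff]

lemma step_transfer {h : ℕ} (hpos : 0 < 2^h - 1) {P Q : Finset ℕ}
    (hs : StepN (2^h-1) P Q) :
    PebStep (BtSys h hpos) (Fn (2^h-1) P) (Fn (2^h-1) Q) := by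
  obtain ⟨v, hv, hshape, hkids⟩ := hs
  refine ⟨⟨v, hv⟩, ?_, ?_⟩
  · rcases hshape with ⟨hvP, hQ⟩ | ⟨hvQ, hP⟩
    · left
      refine ⟨by simpa [mem_Fn] using hvP, ?_⟩
      rw [hQ, Fn_insert hv]
    · right
      refine ⟨by simpa [mem_Fn] using hvQ, ?_⟩
      rw [hP, Fn_insert hv]
  · intro u hne hpar
    have h1 : u.val ≠ v := by
      intro hh; exact hne (Fin.ext hh)
    have h2 : pa u.val = v := congrArg Fin.val hpar
    rw [mem_Fn]
    exact hkids u.val u.isLt h1 h2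

/-! ### length bounds -/

lemma pmov_len (q a b : ℕ) : (pmov q a b).length ≤ 3^(b-a) := by
  rw [pmov]
  split_ifs with hba
  · simp only [List.length_singleton]
    exact Nat.one_le_pow _ _ (by norm_num)
  · have h1 := pmov_len q ((a+b)/2) b
    have h2 := pmov_len q a ((a+b)/2)
    simp only [List.length_append, List.length_reverse]
    have e1 : b - (a+b)/2 ≤ b - a - 1 := by omega
    have e2 : (a+b)/2 - a ≤ b - a - 1 := by omega
    have p1 : (3:ℕ)^(b-(a+b)/2) ≤ 3^(b-a-1) := Nat.pow_le_pow_right (by norm_num) e1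
    have p2 : (3:ℕ)^((a+b)/2-a) ≤ 3^(b-a-1) := Nat.pow_le_pow_right (by norm_num) e2
    have e3 : (3:ℕ)^(b-a) = 3*3^(b-a-1) := by
      rw [← pow_succ']; congr 1; omega
    omega
termination_by b - a
decreasing_by all_goals omega

lemma mov_len (m : ℕ) : ∀ q j, (mov q j m).length ≤ 3^(j+2*m) := by
  induction m using Nat.strong_induction_on with
  | _ m ih =>
  intro q j
  rcases m with _ | _ | m
  · exact (pmov_len q 0 j).trans (Nat.pow_le_pow_right (by norm_num) (by omega))
  · exact (pmov_len q 0 j).trans (Nat.pow_le_pow_right (by norm_num) (by omega))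
  · have hA := ih (m+1) (by omega) ((q+1)*2^j) 1
    have hB := ih (m+1) (by omega) q (j+1)
    show (mov ((q+1)*2^j) 1 (m+1) ++ mov q (j+1) (m+1) ++
        (mov ((q+1)*2^j) 1 (m+1)).reverse).length ≤ _
    simp only [List.length_append, List.length_reverse]
    have e1 : (1:ℕ)+2*(m+1) ≤ j+2*(m+1+1)-1 := by omega
    have e2 : j+1+2*(m+1) ≤ j+2*(m+1+1)-1 := by omega
    have p1 : (3:ℕ)^(1+2*(m+1)) ≤ 3^(j+2*(m+1+1)-1) := Nat.pow_le_pow_right (by norm_num) e1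
    have p2 : (3:ℕ)^(j+1+2*(m+1)) ≤ 3^(j+2*(m+1+1)-1) := Nat.pow_le_pow_right (by norm_num) e2
    have e3 : (3:ℕ)^(j+2*(m+1+1)) = 3*3^(j+2*(m+1+1)-1) := by
      have h0 : j+2*(m+1+1) - 1 + 1 = j+2*(m+1+1) := by omega
      conv_lhs => rw [← h0]
      rw [pow_succ']
    omega

lemma sq_le_two_pow : ∀ k, 4 ≤ k → k*k ≤ 2^k ∧ 2*k+2 ≤ 2^k := by
  intro k hk
  induction k, hk using Nat.le_induction with
  | base => norm_num
  | succ k hk ih =>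
      obtain ⟨h1, h2⟩ := ih
      have e : (2:ℕ)^(k+1) = 2^k + 2^k := by rw [pow_succ]; ring
      constructor
      · have : (k+1)*(k+1) = k*k + (2*k+1) := by ring
        omega
      · omega

lemma len_glue : ∀ h, 1 ≤ h → 3^(1+2*h) + 1 ≤ 2^(5*h) := by
  intro h hh
  induction h, hh using Nat.le_induction with
  | base => norm_num
  | succ k hk ih =>
      have e1 : (3:ℕ)^(1+2*(k+1)) = 9 * 3^(1+2*k) := by
        rw [show 1+2*(k+1) = (1+2*k)+2 by omega, pow_add]; ring
      have e2 : (2:ℕ)^(5*(k+1)) = 32 * 2^(5*k) := by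
        rw [show 5*(k+1) = 5*k+5 by omega, pow_add]; ring
      omega

end RevPeb

/-- There is an absolute constant `C > 0` such that for
every real `ε` with `0 < ε ≤ 1` there is a threshold `h₀` such that for all
`h ≥ h₀` the complete binary tree `Bt_h` has a reversible pebbling using at
most `(1 + ε) · h` pebbles and at most `n ^ (C · (log₂(1/ε) + 1))` steps,
where `n = 2 ^ h - 1` is the number of vertices.  (The threshold is stated as
`h₀ + 1 ≤ h`, i.e. `h` larger than some `h₀`, which in particular forces
`h ≥ 1`.) -/
theorem bt_almost_optimal_pebbling_poly_time :
    ∃ C : ℝ, 0 < C ∧ ∀ ε : ℝ, 0 < ε → ε ≤ 1 →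
      ∃ h₀ : ℕ, ∀ (h : ℕ) (hh : h₀ + 1 ≤ h),
        ∃ L : List (Finset (Fin (2 ^ h - 1))),
          IsPebbling (BtSys h
            (by have : 1 < 2 ^ h := Nat.one_lt_two_pow_iff.mpr (by omega); omega)) L ∧
          (pebSpace L : ℝ) ≤ (1 + ε) * h ∧
          (L.length : ℝ) ≤ ((2 ^ h - 1 : ℕ) : ℝ) ^
            (C * (Real.logb 2 (1 / ε) + 1)) := by
  refine ⟨12, by norm_num, ?_⟩
  intro ε hε hε1
  refine ⟨⌈(16:ℝ)/ε^2⌉₊ + 16, ?_⟩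
  intro h hh
  have hh1 : 1 ≤ h := by omega
  have hh2 : 17 ≤ h := by omega
  have hpos : 0 < 2^h - 1 := by
    have : 1 < 2^h := Nat.one_lt_two_pow_iff.mpr (by omega)
    omega
  have hsplit : (2:ℕ)^h = 2^(h-1)*2 := RevPeb.pow_split h hh1
  have HL : 2^(h-1) ≤ (0+1) * 2^(1+h-2) := by
    rw [show 1+h-2 = h-1 by omega]
    omega
  have HR : (0+2) * 2^(1+h-2) ≤ 2^h := by
    rw [show 1+h-2 = h-1 by omega]
    omega
  obtain ⟨hval, happl, hsub, hspc⟩ :=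
    RevPeb.mov_spec (h := h) h 0 1 le_rfl hh1 HL HR ∅
      (fun i hi hij => absurd hij (by omega))
      (fun x _ => Finset.notMem_empty x)
  set nn := 2^h - 1 with hnn
  set ms := RevPeb.mov 0 1 h with hms
  set L := (RevPeb.confs ∅ ms).map (RevPeb.Fn nn) with hL
  have hcards : ∀ Q ∈ RevPeb.confs ∅ ms, (RevPeb.Fn nn Q).card = Q.card := by
    intro Q hQ
    exact RevPeb.Fn_card (RevPeb.confs_mem_lt hval (by simp) Q hQ)
  have hpeb : pebSpace L = RevPeb.spc ∅ ms := by
    rw [hL]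
    unfold pebSpace
    rw [List.map_map]
    have hmc : (RevPeb.confs ∅ ms).map (Finset.card ∘ RevPeb.Fn nn)
        = (RevPeb.confs ∅ ms).map Finset.card := by
      apply List.map_congr_left
      intro Q hQ
      simpa using hcards Q hQ
    rw [hmc, RevPeb.confs_foldr]
  refine ⟨L, ⟨?_, ?_, ?_⟩, ?_, ?_⟩
  · -- head
    rw [hL, List.head?_map, RevPeb.confs_head]
    simp [RevPeb.Fn_empty]
  · -- last
    rw [hL, RevPeb.confs_map_getLast?, happl]
    congr 1
    ext i
    simp [RevPeb.Fn, BtSys, Fin.ext_iff]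
  · -- chain
    rw [hL, List.Chain', List.isChain_map]
    exact (RevPeb.confs_chain hval).imp (fun a b hab => RevPeb.step_transfer hpos hab)
  · -- space bound
    have hspc' : pebSpace L ≤ h + Nat.log 2 h + 2 := by
      rw [hpeb]
      simp only [Finset.card_empty] at hspc
      omega
    have hhR : (16:ℝ)/ε^2 ≤ (h:ℝ) := by
      have h1 : (⌈(16:ℝ)/ε^2⌉₊ : ℝ) ≤ (h:ℝ) := by
        have : (⌈(16:ℝ)/ε^2⌉₊ : ℕ) ≤ h := by omega
        exact_mod_cast this
      exact le_trans (Nat.le_ceil _) h1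
    have hsq : 4/ε ≤ Real.sqrt h := by
      have h2 : ((4:ℝ)/ε)^2 ≤ (h:ℝ) := by
        rw [div_pow]
        norm_num
        exact hhR
      have h3 := Real.sqrt_le_sqrt h2
      rwa [Real.sqrt_sq (by positivity)] at h3
    have hεsq : 4 ≤ ε * Real.sqrt h := by
      rw [div_le_iff₀ hε] at hsq
      linarith
    have hsqh : Real.sqrt h * Real.sqrt h = (h:ℝ) := Real.mul_self_sqrt (by positivity)
    have hsqnn : 0 ≤ Real.sqrt h := Real.sqrt_nonneg _
    have hfour : 4 * Real.sqrt h ≤ ε * (h:ℝ) := by nlinarith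
    have hsqb : (Nat.log 2 h : ℝ) + 2 ≤ Real.sqrt h + 5 := by
      rcases le_or_gt (Nat.log 2 h) 3 with hk | hk
      · have : (Nat.log 2 h : ℝ) ≤ 3 := by exact_mod_cast hk
        linarith
      · obtain ⟨hs1, _⟩ := RevPeb.sq_le_two_pow _ hk
        have hs2 : 2^(Nat.log 2 h) ≤ h := Nat.pow_log_le_self 2 (by omega)
        have hs3 : Nat.log 2 h ≤ Nat.sqrt h := Nat.le_sqrt.mpr (by omega)
        have hs5 : Nat.sqrt h * Nat.sqrt h ≤ h := by simpa [pow_two] using Nat.sqrt_le' h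
        have hs4 : (Nat.sqrt h : ℝ) ≤ Real.sqrt h := by
          have h5 : ((Nat.sqrt h : ℝ))^2 ≤ (h:ℝ) := by
            rw [sq]
            exact_mod_cast hs5
          have h6 := Real.sqrt_le_sqrt h5
          rwa [Real.sqrt_sq (by positivity)] at h6
        have h7 : (Nat.log 2 h : ℝ) ≤ (Nat.sqrt h : ℝ) := by exact_mod_cast hs3
        linarith
    have hfive : Real.sqrt h + 5 ≤ 4 * Real.sqrt h := by
      have h4e : (4:ℝ) ≤ 4/ε := by
        rw [le_div_iff₀ hε]
        nlinarith
      have : (4:ℝ) ≤ Real.sqrt h := le_trans h4e hsq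
      linarith
    have hlog : (Nat.log 2 h : ℝ) + 2 ≤ ε * h := by linarith
    have hcast : (pebSpace L : ℝ) ≤ (h:ℝ) + ((Nat.log 2 h : ℝ) + 2) := by
      have h8 : ((pebSpace L : ℕ) : ℝ) ≤ ((h + Nat.log 2 h + 2 : ℕ) : ℝ) := by
        exact_mod_cast hspc'
      push_cast at h8
      linarith
    calc (pebSpace L : ℝ) ≤ (h:ℝ) + ((Nat.log 2 h : ℝ) + 2) := hcast
      _ ≤ (h:ℝ) + ε * h := by linarith
      _ = (1 + ε) * h := by ring
  · -- length bound
    have hlen1 : L.length = ms.length + 1 := by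
      rw [hL, List.length_map, RevPeb.confs_length]
    have hlen2 : ms.length ≤ 3^(1+2*h) := RevPeb.mov_len h 0 1
    have hlen3 : 3^(1+2*h) + 1 ≤ 2^(5*h) := RevPeb.len_glue h hh1
    have hlen4 : (2:ℕ)^(5*h) ≤ (2^(h-1))^12 := by
      rw [← pow_mul]
      exact Nat.pow_le_pow_right (by norm_num) (by omega)
    have hlen5 : ((2:ℕ)^(h-1))^12 ≤ nn^12 := by
      apply Nat.pow_le_pow_left
      have h1 : (1:ℕ) ≤ 2^(h-1) := Nat.one_le_two_pow
      omega
    have hlenN : L.length ≤ nn^12 := by omega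
    have hn1 : (1:ℝ) ≤ (nn:ℝ) := by
      have : 1 ≤ nn := by omega
      exact_mod_cast this
    have hlb : 0 ≤ Real.logb 2 (1/ε) := by
      apply Real.logb_nonneg (by norm_num)
      rw [le_div_iff₀ hε]
      nlinarith
    calc (L.length : ℝ) ≤ ((nn^12 : ℕ) : ℝ) := by exact_mod_cast hlenN
      _ = (nn:ℝ)^(12:ℕ) := by push_cast; ring
      _ = (nn:ℝ)^((12:ℕ):ℝ) := (Real.rpow_natCast _ _).symm
      _ ≤ (nn:ℝ)^(12 * (Real.logb 2 (1/ε) + 1)) := by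
          apply Real.rpow_le_rpow_of_exponent_le hn1
          push_cast
          nlinarith
end

section
/- For all positive integers k and d there exists a constant C > 0 such that every rooted directed tree T with n vertices whose underlying undirected tree has maximum degree at most d admits a reversible pebbling using at most C · n^{1/k} pebbles and at most C · n steps. -/
/-- The underlying undirected graph of a rooted directed tree: `u` and `v` are
adjacent iff one is the parent of the other. -/
def undirG {V : Type} (T : PebSys V) : SimpleGraph V :=
  SimpleGraph.fromRel (fun u v => T.parent u = v)


namespace PebAux


variable {V : Type} [DecidableEq V] {T : PebSys V}

theorem pebStep_symm {P Q : Finset V} (h : PebStep T P Q) : PebStep T Q P := by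
  obtain ⟨v, hv, hcond⟩ := h
  refine ⟨v, hv.symm, fun u hu hp => ?_⟩
  rcases hv with ⟨hvP, rfl⟩ | ⟨hvQ, rfl⟩
  · exact Finset.mem_insert_of_mem (hcond u hu hp)
  · have := hcond u hu hp
    rcases Finset.mem_insert.1 this with h | h
    · exact absurd h hu
    · exact h

theorem pebStep_union {P Q S E : Finset V} (h : PebStep T P Q)
    (hP : P ⊆ S) (hQ : Q ⊆ S) (hE : ∀ x ∈ E, x ∉ S) :
    PebStep T (P ∪ E) (Q ∪ E) := by
  obtain ⟨v, hv, hcond⟩ := h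
  refine ⟨v, ?_, fun u hu hp => Finset.mem_union_left _ (hcond u hu hp)⟩
  rcases hv with ⟨hvP, rfl⟩ | ⟨hvQ, rfl⟩
  · have hvS : v ∈ S := hQ (Finset.mem_insert_self v P)
    have hvE : v ∉ E := fun hvE => hE v hvE hvS
    left
    refine ⟨fun hc => ?_, by rw [Finset.insert_union]⟩
    rcases Finset.mem_union.1 hc with h | h
    · exact hvP h
    · exact hvE h
  · have hvS : v ∈ S := hP (Finset.mem_insert_self v Q)
    have hvE : v ∉ E := fun hvE => hE v hvE hvS
    right
    refine ⟨fun hc => ?_, by rw [Finset.insert_union]⟩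
    rcases Finset.mem_union.1 hc with h | h
    · exact hvQ h
    · exact hvE h

def RunFT (T : PebSys V) (A B : Finset V) (L : List (Finset V)) : Prop :=
  L.head? = some A ∧ L.getLast? = some B ∧ L.Chain' (PebStep T)

theorem RunFT.ne_nil {A B : Finset V} {L : List (Finset V)} (h : RunFT T A B L) : L ≠ [] := by
  intro hL; rw [hL] at h; simp [RunFT] at h

theorem RunFT.symm {A B : Finset V} {L : List (Finset V)} (h : RunFT T A B L) :
    RunFT T B A L.reverse := by
  obtain ⟨h1, h2, h3⟩ := h
  refine ⟨by rw [List.head?_reverse]; exact h2, by rw [List.getLast?_reverse]; exact h1, ?_⟩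
  unfold List.Chain' at h3 ⊢
  rw [List.isChain_reverse]
  exact h3.imp fun a b hab => pebStep_symm hab

theorem RunFT.trans {A B C : Finset V} {L1 L2 : List (Finset V)}
    (h1 : RunFT T A B L1) (h2 : RunFT T B C L2) :
    RunFT T A C (L1 ++ L2.tail) ∧ (L1 ++ L2.tail).length + 1 = L1.length + L2.length ∧
      ∀ R ∈ L1 ++ L2.tail, R ∈ L1 ∨ R ∈ L2 := by
  obtain ⟨h1h, h1l, h1c⟩ := h1
  obtain ⟨h2h, h2l, h2c⟩ := h2
  obtain ⟨t, rfl⟩ : ∃ t, L2 = B :: t := by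
    cases L2 with
    | nil => simp at h2h
    | cons a t => simp at h2h; exact ⟨t, by rw [h2h]⟩
  have hne1 : L1 ≠ [] := by intro h; rw [h] at h1h; simp at h1h
  have hlast1 : L1.getLast? = some B := h1l
  constructor
  · refine ⟨?_, ?_, ?_⟩
    · cases L1 with
      | nil => exact absurd rfl hne1
      | cons a l => simpa using h1h
    · cases t with
      | nil =>
        simp only [List.tail_cons, List.append_nil]
        rw [hlast1]
        simpa using h2l
      | cons c t' =>
        have h2l' : (c :: t').getLast? = some C := by
          rw [← h2l]; rfl
        rw [List.tail_cons, List.getLast?_append, h2l']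
        rfl
    · unfold List.Chain'
      rw [List.isChain_append]
      refine ⟨h1c, (List.isChain_cons.1 h2c).2, fun x hx y hy => ?_⟩
      rw [hlast1] at hx
      simp at hx; subst hx
      exact (List.isChain_cons.1 h2c).1 y hy
  constructor
  · simp [List.length_append]; omega
  · intro R hR
    rcases List.mem_append.1 hR with h | h
    · exact Or.inl h
    · exact Or.inr (List.mem_cons_of_mem _ h)

theorem chain'_mono_mem {α : Type*} {R S : α → α → Prop} :
    ∀ {l : List α}, l.Chain' R → (∀ a ∈ l, ∀ b ∈ l, R a b → S a b) → l.Chain' S := by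
  intro l
  induction l with
  | nil => intro _ _; exact List.isChain_nil
  | cons a l ih =>
    intro hc himp
    unfold List.Chain' at hc ⊢
    rw [List.isChain_cons] at hc ⊢
    refine ⟨fun y hy => himp a (by simp) y (by cases l with
      | nil => simp at hy
      | cons b l' => simp at hy; simp [hy]) (hc.1 y hy), ih hc.2 fun x hx y hy h => himp x (by simp [hx]) y (by simp [hy]) h⟩

theorem RunFT.mono {A B S E : Finset V} {L : List (Finset V)} (h : RunFT T A B L)
    (hS : ∀ R ∈ L, R ⊆ S) (hE : ∀ x ∈ E, x ∉ S) :
    RunFT T (A ∪ E) (B ∪ E) (L.map (· ∪ E)) := by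
  obtain ⟨h1, h2, h3⟩ := h
  refine ⟨?_, ?_, ?_⟩
  · rw [List.head?_map, h1]; rfl
  · rw [List.getLast?_map, h2]; rfl
  · unfold List.Chain'
    rw [List.isChain_map]
    exact chain'_mono_mem h3 fun a ha b hb hab => pebStep_union hab (hS a ha) (hS b hb) hE



variable [Fintype V]

open Classical in
noncomputable def dep (T : PebSys V) (r v : V) : ℕ :=
  if h : ∃ j, T.parent^[j] v = r then Nat.find h else 0

theorem dep_spec {r v : V} (h : ∃ j, T.parent^[j] v = r) :
    T.parent^[dep T r v] v = r := by
  classical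
  rw [dep]
  split
  · exact Nat.find_spec ‹_›
  · exact absurd h ‹_›

theorem dep_min {r v : V} {j : ℕ} (hj : T.parent^[j] v = r) : dep T r v ≤ j := by
  have h : ∃ j, T.parent^[j] v = r := ⟨j, hj⟩
  classical
  rw [dep]
  split
  · exact Nat.find_min' ‹_› hj
  · exact absurd h ‹_›

theorem dep_self (r : V) : dep T r r = 0 :=
  Nat.le_zero.1 (dep_min (by simp))

theorem dep_eq_zero_iff {r v : V} (h : ∃ j, T.parent^[j] v = r) :
    dep T r v = 0 ↔ v = r := by
  constructor
  · intro h0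
    have := dep_spec h
    rwa [h0, Function.iterate_zero_apply] at this
  · rintro rfl; exact dep_self _

theorem iterate_fix (htree : IsRDTree T) {x : V} {j : ℕ} (hj : 1 ≤ j)
    (hfix : T.parent^[j] x = x) : x = T.root := by
  obtain ⟨N, hN⟩ := htree.2 x
  have hit : ∀ c : ℕ, T.parent^[c * j] x = x := by
    intro c
    induction c with
    | zero => simp
    | succ c ih =>
      rw [Nat.succ_mul, Function.iterate_add_apply, hfix, ih]
  have hNj : N ≤ N * j := Nat.le_mul_of_pos_right N hj
  have : T.parent^[N * j] x = T.root := by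
    have : T.parent^[(N * j - N) + N] x = T.root := by
      rw [Function.iterate_add_apply, hN]
      exact Function.iterate_fixed htree.1 _
    rwa [Nat.sub_add_cancel hNj] at this
  rw [hit N] at this
  exact this

section Sub

variable {W : Finset V} {r : V}

/-- parent of a non-`r` member of `W`: stays in `W` and depth decreases by one. -/
theorem dep_parent (hclose : ∀ v ∈ W, v ≠ r → T.parent v ∈ W)
    (hreach : ∀ v ∈ W, ∃ j, T.parent^[j] v = r)
    {v : V} (hv : v ∈ W) (hvr : v ≠ r) :
    T.parent v ∈ W ∧ dep T r (T.parent v) + 1 = dep T r v := by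
  have hW : T.parent v ∈ W := hclose v hv hvr
  have hex : ∃ j, T.parent^[j] v = r := hreach v hv
  have h1 : 1 ≤ dep T r v := by
    rcases Nat.eq_zero_or_pos (dep T r v) with h | h
    · exact absurd ((dep_eq_zero_iff hex).1 h) hvr
    · exact h
  have hs := dep_spec hex
  have hspec : T.parent^[dep T r v - 1] (T.parent v) = r := by
    rw [← Function.iterate_succ_apply]
    rwa [Nat.succ_eq_add_one, Nat.sub_add_cancel h1]
  have hle : dep T r (T.parent v) ≤ dep T r v - 1 := dep_min hspec
  have hge : dep T r v ≤ dep T r (T.parent v) + 1 := by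
    apply dep_min
    rw [Function.iterate_succ_apply]
    exact dep_spec ⟨_, hspec⟩
  exact ⟨hW, by omega⟩

/-- a child (in-neighbour) of a member of `W` cannot be `r` itself. -/
theorem child_ne_r (htree : IsRDTree T)
    (hreach : ∀ v ∈ W, ∃ j, T.parent^[j] v = r)
    {v u : V} (hv : v ∈ W) (huv : u ≠ v) (hp : T.parent u = v) : u ≠ r := by
  intro hur
  have hp' : T.parent r = v := by rw [← hur]; exact hp
  have hs : T.parent^[dep T r v] v = r := dep_spec (hreach v hv)
  have hfix : T.parent^[dep T r v + 1] r = r := by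
    rw [Function.iterate_succ_apply, hp', hs]
  have hroot := iterate_fix htree (by omega) hfix
  rw [hroot] at hp'
  rw [htree.1] at hp'
  apply huv
  rw [hur, hroot, hp']

open Classical in
noncomputable def subW (T : PebSys V) (r : V) (W : Finset V) (s : V) : Finset V :=
  W.filter (fun v => T.parent^[dep T r v - dep T r s] v = s)

theorem mem_subW {s v : V} :
    v ∈ subW T r W s ↔ v ∈ W ∧ T.parent^[dep T r v - dep T r s] v = s := by
  classical
  simp [subW]

theorem self_mem_subW {s : V} (hs : s ∈ W) : s ∈ subW T r W s := by
  rw [mem_subW]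
  exact ⟨hs, by simp⟩

theorem subW_subset {s : V} : subW T r W s ⊆ W := fun v hv => (mem_subW.1 hv).1

theorem dep_lt_of_mem_subW {s v : V} (hv : v ∈ subW T r W s) :
    v = s ∨ dep T r s < dep T r v := by
  rcases le_or_gt (dep T r v) (dep T r s) with h | h
  · left
    have := (mem_subW.1 hv).2
    rwa [Nat.sub_eq_zero_of_le h, Function.iterate_zero_apply] at this
  · right; exact h

theorem r_not_mem_subW {s : V} (hsr : s ≠ r) : r ∉ subW T r W s := by
  intro hr
  have := (mem_subW.1 hr).2
  rw [dep_self, Nat.zero_sub, Function.iterate_zero_apply] at this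
  exact hsr this.symm

theorem subW_r_eq (hreach : ∀ v ∈ W, ∃ j, T.parent^[j] v = r) : subW T r W r = W := by
  ext v
  rw [mem_subW]
  constructor
  · exact fun h => h.1
  · intro hv
    refine ⟨hv, ?_⟩
    rw [dep_self, Nat.sub_zero]
    exact dep_spec (hreach v hv)

theorem parent_mem_subW (hclose : ∀ v ∈ W, v ≠ r → T.parent v ∈ W)
    (hreach : ∀ v ∈ W, ∃ j, T.parent^[j] v = r)
    {s v : V} (hv : v ∈ subW T r W s) (hvs : v ≠ s) :
    T.parent v ∈ subW T r W s ∧ dep T r (T.parent v) + 1 = dep T r v := by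
  obtain ⟨hvW, hcond⟩ := mem_subW.1 hv
  have hds : dep T r s < dep T r v := by
    rcases dep_lt_of_mem_subW hv with h | h
    · exact absurd h hvs
    · exact h
  have hvr : v ≠ r := by
    intro h
    rw [h, dep_self] at hds
    omega
  obtain ⟨hpW, hdp⟩ := dep_parent hclose hreach hvW hvr
  refine ⟨mem_subW.2 ⟨hpW, ?_⟩, hdp⟩
  have harith : dep T r (T.parent v) - dep T r s + 1 = dep T r v - dep T r s := by omega
  have : T.parent^[dep T r (T.parent v) - dep T r s + 1] v = s := by
    rw [harith]; exact hcond
  rwa [Function.iterate_succ_apply] at this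

theorem child_mem_subW (htree : IsRDTree T) (hclose : ∀ v ∈ W, v ≠ r → T.parent v ∈ W)
    (hreach : ∀ v ∈ W, ∃ j, T.parent^[j] v = r)
    {s v u : V} (hv : v ∈ subW T r W s) (huW : u ∈ W) (huv : u ≠ v)
    (hp : T.parent u = v) :
    u ∈ subW T r W s ∧ dep T r u = dep T r v + 1 := by
  obtain ⟨hvW, hcond⟩ := mem_subW.1 hv
  have hur : u ≠ r := child_ne_r htree hreach hvW huv hp
  obtain ⟨-, hdp⟩ := dep_parent hclose hreach huW hur
  rw [hp] at hdp
  have hds : dep T r s ≤ dep T r v := by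
    rcases dep_lt_of_mem_subW hv with h | h
    · rw [h]
    · omega
  have harith : dep T r u - dep T r s = (dep T r v - dep T r s) + 1 := by omega
  refine ⟨mem_subW.2 ⟨huW, ?_⟩, by omega⟩
  rw [harith, Function.iterate_succ_apply, hp]
  exact hcond

theorem iterate_mem_subW (hclose : ∀ v ∈ W, v ≠ r → T.parent v ∈ W)
    (hreach : ∀ v ∈ W, ∃ j, T.parent^[j] v = r)
    {s v : V} (hv : v ∈ subW T r W s) :
    ∀ i, i ≤ dep T r v - dep T r s →
      T.parent^[i] v ∈ subW T r W s ∧ dep T r (T.parent^[i] v) = dep T r v - i := by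
  intro i
  induction i with
  | zero => intro _; simpa using hv
  | succ i ih =>
    intro hi
    obtain ⟨hx, hdx⟩ := ih (by omega)
    have hds : dep T r s < dep T r v := by
      rcases dep_lt_of_mem_subW hv with h | h
      · rw [h] at hi ⊢; omega
      · exact h
    have hxs : T.parent^[i] v ≠ s := by
      intro h
      rw [h] at hdx
      have : dep T r s = dep T r v - i := hdx
      omega
    obtain ⟨hpx, hdpx⟩ := parent_mem_subW hclose hreach hx hxs
    rw [Function.iterate_succ_apply']
    exact ⟨hpx, by omega⟩

theorem exists_child_decomp (hclose : ∀ v ∈ W, v ≠ r → T.parent v ∈ W)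
    (hreach : ∀ v ∈ W, ∃ j, T.parent^[j] v = r)
    {s v : V} (hv : v ∈ subW T r W s) (hvs : v ≠ s) :
    ∃ u, u ∈ W ∧ u ≠ s ∧ T.parent u = s ∧ v ∈ subW T r W u := by
  obtain ⟨hvW, hcond⟩ := mem_subW.1 hv
  have hds : dep T r s < dep T r v := by
    rcases dep_lt_of_mem_subW hv with h | h
    · exact absurd h hvs
    · exact h
  set D := dep T r v - dep T r s with hD
  have hD1 : 1 ≤ D := by omega
  obtain ⟨hu, hdu⟩ := iterate_mem_subW hclose hreach hv (D - 1) (by omega)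
  set u := T.parent^[D - 1] v with hu_def
  have hduv : dep T r u = dep T r s + 1 := by omega
  have hus : u ≠ s := by
    intro h
    rw [h] at hduv
    omega
  have hpu : T.parent u = s := by
    have h2 : T.parent^[D] v = T.parent (T.parent^[D - 1] v) := by
      conv_lhs => rw [show D = (D - 1) + 1 by omega]
      exact Function.iterate_succ_apply' _ _ _
    rw [hu_def, ← h2]
    exact hcond
  refine ⟨u, subW_subset hu, hus, hpu, ?_⟩
  rw [mem_subW]
  refine ⟨hvW, ?_⟩
  have : dep T r v - dep T r u = D - 1 := by omega
  rw [this]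

theorem subW_card_le {d θ : ℕ} (hclose : ∀ v ∈ W, v ≠ r → T.parent v ∈ W)
    (hreach : ∀ v ∈ W, ∃ j, T.parent^[j] v = r)
    (hdeg : ∀ x : V, (Finset.univ.filter (fun u => u ≠ x ∧ T.parent u = x)).card ≤ d)
    {s : V}
    (hbound : ∀ u ∈ W, u ≠ s → T.parent u = s → (subW T r W u).card ≤ θ) :
    (subW T r W s).card ≤ d * θ + 1 := by
  classical
  have hsub : subW T r W s ⊆
      insert s ((W.filter (fun u => u ≠ s ∧ T.parent u = s)).biUnion (subW T r W)) := by
    intro v hv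
    by_cases hvs : v = s
    · simp [hvs]
    · obtain ⟨u, huW, hus, hpu, hvu⟩ := exists_child_decomp hclose hreach hv hvs
      apply Finset.mem_insert_of_mem
      rw [Finset.mem_biUnion]
      exact ⟨u, Finset.mem_filter.2 ⟨huW, hus, hpu⟩, hvu⟩
  calc (subW T r W s).card ≤ _ := Finset.card_le_card hsub
    _ ≤ ((W.filter (fun u => u ≠ s ∧ T.parent u = s)).biUnion (subW T r W)).card + 1 :=
        Finset.card_insert_le _ _
    _ ≤ (∑ u ∈ W.filter (fun u => u ≠ s ∧ T.parent u = s), (subW T r W u).card) + 1 := by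
        exact Nat.add_le_add_right (Finset.card_biUnion_le) 1
    _ ≤ (W.filter (fun u => u ≠ s ∧ T.parent u = s)).card * θ + 1 := by
        apply Nat.add_le_add_right
        apply Finset.sum_le_card_nsmul
        intro u hu
        obtain ⟨huW, hus, hpu⟩ := Finset.mem_filter.1 hu
        exact hbound u huW hus hpu
    _ ≤ d * θ + 1 := by
        apply Nat.add_le_add_right
        apply Nat.mul_le_mul_right
        calc (W.filter (fun u => u ≠ s ∧ T.parent u = s)).card
            ≤ (Finset.univ.filter (fun u => u ≠ s ∧ T.parent u = s)).card := by
              apply Finset.card_le_card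
              apply Finset.filter_subset_filter
              exact Finset.subset_univ W
          _ ≤ d := hdeg s

theorem exists_sep {d : ℕ} (hd1 : 0 < d) (htree : IsRDTree T)
    (hclose : ∀ v ∈ W, v ≠ r → T.parent v ∈ W)
    (hreach : ∀ v ∈ W, ∃ j, T.parent^[j] v = r)
    (hrW : r ∈ W)
    (hdeg : ∀ x : V, (Finset.univ.filter (fun u => u ≠ x ∧ T.parent u = x)).card ≤ d)
    (θ : ℕ) (hbig : d * θ + 1 < W.card) :
    ∃ s ∈ W, s ≠ r ∧ θ < (subW T r W s).card ∧ (subW T r W s).card ≤ d * θ + 1 := by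
  classical
  set A := W.filter (fun v => θ < (subW T r W v).card) with hA
  have hrA : r ∈ A := by
    rw [hA, Finset.mem_filter]
    refine ⟨hrW, ?_⟩
    rw [subW_r_eq hreach]
    have : θ ≤ d * θ := Nat.le_mul_of_pos_left θ hd1
    omega
  obtain ⟨s, hsA, hmax⟩ := Finset.exists_max_image A (dep T r) ⟨r, hrA⟩
  obtain ⟨hsW, hsθ⟩ := Finset.mem_filter.1 hsA
  have hcard : (subW T r W s).card ≤ d * θ + 1 := by
    apply subW_card_le hclose hreach hdeg
    intro u huW hus hpu
    by_contra hc
    push_neg at hc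
    have huA : u ∈ A := Finset.mem_filter.2 ⟨huW, hc⟩
    have hle := hmax u huA
    have hur : u ≠ r := child_ne_r htree hreach hsW hus hpu
    obtain ⟨-, hdp⟩ := dep_parent hclose hreach huW hur
    rw [hpu] at hdp
    omega
  have hsr : s ≠ r := by
    intro h
    rw [h, subW_r_eq hreach] at hcard
    omega
  exact ⟨s, hsW, hsr, hsθ, hcard⟩

end Sub


theorem base_run {W : Finset V} {r : V} {P : Finset V}
    (hr : r ∈ W) (hdisj : ∀ x ∈ W, x ∉ P)
    (hcover : ∀ v ∈ W, ∀ u : V, u ≠ v → T.parent u = v → u ∈ W ∨ u ∈ P)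
    (hcard : W.card = 1) :
    ∃ L : List (Finset V), RunFT T P (insert r P) L ∧
      (∀ R ∈ L, P ⊆ R ∧ R ⊆ W ∪ P ∧ (R \ P).card ≤ 1) ∧ L.length = 2 := by
  have hWr : W = {r} := by
    obtain ⟨a, ha⟩ := Finset.card_eq_one.1 hcard
    rw [ha] at hr ⊢
    rw [Finset.mem_singleton.1 hr]
  refine ⟨[P, insert r P], ⟨rfl, rfl, ?_⟩, ?_, rfl⟩
  · unfold List.Chain'
    rw [List.isChain_pair]
    refine ⟨r, Or.inl ⟨hdisj r hr, rfl⟩, fun u hu hp => ?_⟩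
    rcases hcover r hr u hu hp with h | h
    · rw [hWr, Finset.mem_singleton] at h
      exact absurd h hu
    · exact h
  · intro R hR
    rcases List.mem_pair.1 hR with rfl | rfl
    · exact ⟨Finset.Subset.refl _, Finset.subset_union_right, by simp⟩
    · refine ⟨Finset.subset_insert _ _, ?_, ?_⟩
      · intro x hx
        rcases Finset.mem_insert.1 hx with rfl | hx
        · exact Finset.mem_union_left _ hr
        · exact Finset.mem_union_right _ hx
      · have : insert r P \ P ⊆ {r} := by
          intro x hx
          obtain ⟨hx1, hx2⟩ := Finset.mem_sdiff.1 hx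
          rcases Finset.mem_insert.1 hx1 with rfl | hx1
          · exact Finset.mem_singleton_self _
          · exact absurd hx1 hx2
        calc (insert r P \ P).card ≤ ({r} : Finset V).card := Finset.card_le_card this
          _ = 1 := Finset.card_singleton r

theorem glue_run {W W1 : Finset V} {r s : V} {P : Finset V}
    (hW1 : W1 ⊆ W) (hrW : r ∈ W) (hrW1 : r ∉ W1) (hrP : r ∉ P) (hsW : s ∈ W)
    {L1 L2 : List (Finset V)} {b1 b2 : ℕ}
    (h1 : RunFT T P (insert s P) L1)
    (h2 : RunFT T (insert s P) (insert r (insert s P)) L2)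
    (hc1 : ∀ R ∈ L1, P ⊆ R ∧ R ⊆ W1 ∪ P ∧ (R \ P).card ≤ b1)
    (hc2 : ∀ R ∈ L2, insert s P ⊆ R ∧ R ⊆ W ∪ insert s P ∧ (R \ insert s P).card ≤ b2) :
    ∃ L : List (Finset V), RunFT T P (insert r P) L ∧
      (∀ R ∈ L, P ⊆ R ∧ R ⊆ W ∪ P ∧ (R \ P).card ≤ max (b1 + 1) (b2 + 1)) ∧
      L.length + 2 = L1.length + L2.length + L1.length := by
  have hins : ∀ X : Finset V, X ∪ {r} = insert r X := by
    intro X; ext x; simp [or_comm]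
  have h1s : RunFT T (insert s P) P L1.reverse := h1.symm
  have hE : ∀ x ∈ ({r} : Finset V), x ∉ W1 ∪ P := by
    intro x hx
    rw [Finset.mem_singleton] at hx
    subst hx
    intro hc
    rcases Finset.mem_union.1 hc with h | h
    · exact hrW1 h
    · exact hrP h
  have h3 : RunFT T (insert s P ∪ {r}) (P ∪ {r}) (L1.reverse.map (· ∪ {r})) := by
    refine h1s.mono (S := W1 ∪ P) ?_ hE
    intro R hR
    exact (hc1 R (List.mem_reverse.1 hR)).2.1
  rw [hins, hins] at h3
  obtain ⟨h12, hlen12, hmem12⟩ := h1.trans h2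
  obtain ⟨h123, hlen123, hmem123⟩ := h12.trans h3
  refine ⟨_, h123, ?_, ?_⟩
  · intro R hR
    rcases hmem123 R hR with hR' | hR'
    · rcases hmem12 R hR' with hRa | hRa
      · obtain ⟨hp, hw, hb⟩ := hc1 R hRa
        exact ⟨hp, hw.trans (Finset.union_subset_union_left hW1), le_trans hb (le_max_of_le_left (by omega))⟩
      · obtain ⟨hp, hw, hb⟩ := hc2 R hRa
        refine ⟨(Finset.subset_insert s P).trans hp, ?_, ?_⟩
        · intro x hx
          rcases Finset.mem_union.1 (hw hx) with h | h
          · exact Finset.mem_union_left _ h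
          · rcases Finset.mem_insert.1 h with rfl | h
            · exact Finset.mem_union_left _ hsW
            · exact Finset.mem_union_right _ h
        · have hsub : R \ P ⊆ insert s (R \ insert s P) := by
            intro x hx
            obtain ⟨hx1, hx2⟩ := Finset.mem_sdiff.1 hx
            by_cases hxs : x = s
            · exact hxs ▸ Finset.mem_insert_self _ _
            · refine Finset.mem_insert_of_mem (Finset.mem_sdiff.2 ⟨hx1, ?_⟩)
              intro hc
              rcases Finset.mem_insert.1 hc with h | h
              · exact hxs h
              · exact hx2 h
          calc (R \ P).card ≤ (insert s (R \ insert s P)).card := Finset.card_le_card hsub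
            _ ≤ (R \ insert s P).card + 1 := Finset.card_insert_le _ _
            _ ≤ b2 + 1 := by omega
            _ ≤ max (b1 + 1) (b2 + 1) := le_max_right _ _
    · -- R in the tail of the mapped reversed run
      obtain ⟨R1, hR1, rfl⟩ := List.mem_map.1 hR'
      obtain ⟨hp, hw, hb⟩ := hc1 R1 (List.mem_reverse.1 hR1)
      refine ⟨hp.trans Finset.subset_union_left, ?_, ?_⟩
      · intro x hx
        rcases Finset.mem_union.1 hx with h | h
        · rcases Finset.mem_union.1 (hw h) with h' | h'
          · exact Finset.mem_union_left _ (hW1 h')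
          · exact Finset.mem_union_right _ h'
        · rw [Finset.mem_singleton] at h
          exact h ▸ Finset.mem_union_left _ hrW
      · have hsub : (R1 ∪ {r}) \ P ⊆ insert r (R1 \ P) := by
          intro x hx
          obtain ⟨hx1, hx2⟩ := Finset.mem_sdiff.1 hx
          rcases Finset.mem_union.1 hx1 with h | h
          · exact Finset.mem_insert_of_mem (Finset.mem_sdiff.2 ⟨h, hx2⟩)
          · rw [Finset.mem_singleton] at h
            exact h ▸ Finset.mem_insert_self _ _
        calc ((R1 ∪ {r}) \ P).card ≤ (insert r (R1 \ P)).card := Finset.card_le_card hsub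
          _ ≤ (R1 \ P).card + 1 := Finset.card_insert_le _ _
          _ ≤ b1 + 1 := by omega
          _ ≤ max (b1 + 1) (b2 + 1) := le_max_left _ _
  · have hlen3 : (L1.reverse.map (· ∪ {r})).length = L1.length := by simp
    omega

theorem div_bound {d m a j : ℕ} (hm : 1 ≤ m) (ha : a ≤ d * m^j + 1) :
    a / m^(j-1) ≤ d*m + 1 := by
  cases j with
  | zero =>
    simp only [Nat.zero_sub, pow_zero, Nat.div_one]
    have : d ≤ d * m := Nat.le_mul_of_pos_right d hm
    simp only [pow_zero, Nat.mul_one] at ha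
    omega
  | succ j' =>
    have hq : 0 < m ^ j' := Nat.pow_pos hm
    have ha' : a ≤ m ^ j' * (d * m + 1) := by
      have : d * m ^ (j' + 1) = m ^ j' * (d * m) := by ring
      calc a ≤ d * m ^ (j'+1) + 1 := ha
        _ ≤ d * m ^ (j'+1) + m ^ j' := by omega
        _ = m ^ j' * (d * m + 1) := by ring
    have : a / m ^ j' ≤ (m ^ j' * (d * m + 1)) / m ^ j' := Nat.div_le_div_right ha'
    rw [Nat.mul_div_cancel_left _ hq] at this
    simpa using this

def MainStmt (d m k n : ℕ) : Prop :=
  ∀ (V : Type) [Fintype V] [DecidableEq V] (T : PebSys V)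
    (W : Finset V) (r : V) (P : Finset V),
    IsRDTree T →
    (∀ x : V, (Finset.univ.filter (fun u => u ≠ x ∧ T.parent u = x)).card ≤ d) →
    W.card ≤ n → r ∈ W → (∀ x ∈ W, x ∉ P) →
    (∀ v ∈ W, v ≠ r → T.parent v ∈ W) →
    (∀ v ∈ W, ∃ j, T.parent^[j] v = r) →
    (∀ v ∈ W, ∀ u : V, u ≠ v → T.parent u = v → u ∈ W ∨ u ∈ P) →
    ∃ L : List (Finset V),
      RunFT T P (insert r P) L ∧
      (∀ R ∈ L, P ⊆ R ∧ R ⊆ W ∪ P ∧ (R \ P).card ≤ (d+2)*k*m + W.card / m^(k-1) + 1) ∧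
      L.length ≤ 2 * 2^k * W.card

theorem split_step (d m : ℕ) (hd : 0 < d) (hm : 1 ≤ m) (K n : ℕ)
    (IH : ∀ n' : ℕ, n' < n → ∀ k' : ℕ, MainStmt d m k' n') :
    ∀ (V : Type) [Fintype V] [DecidableEq V] (T : PebSys V)
      (W : Finset V) (r : V) (P : Finset V),
      IsRDTree T →
      (∀ x : V, (Finset.univ.filter (fun u => u ≠ x ∧ T.parent u = x)).card ≤ d) →
      W.card ≤ n → r ∈ W → (∀ x ∈ W, x ∉ P) →
      (∀ v ∈ W, v ≠ r → T.parent v ∈ W) →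
      (∀ v ∈ W, ∃ j, T.parent^[j] v = r) →
      (∀ v ∈ W, ∀ u : V, u ≠ v → T.parent u = v → u ∈ W ∨ u ∈ P) →
      d * (m^(K-1) - 1) + 1 < W.card →
      ∃ L : List (Finset V),
        RunFT T P (insert r P) L ∧
        (∀ R ∈ L, P ⊆ R ∧ R ⊆ W ∪ P ∧ (R \ P).card ≤ (d+2)*K*m + W.card / m^(K-1) + 1) ∧
        L.length ≤ 2 * 2^K * W.card := by
  intro V _ _ T W r P htree hdeg hcard hr hdisj hclose hreach hcover hbig
  obtain ⟨s, hsW, hsr, hθ1, hθ2⟩ :=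
    exists_sep hd htree hclose hreach hr hdeg (m^(K-1) - 1) hbig
  set W1 := subW T r W s with hW1def
  have hW1W : W1 ⊆ W := subW_subset
  have hsW1 : s ∈ W1 := self_mem_subW hsW
  have hrW1 : r ∉ W1 := r_not_mem_subW hsr
  have hW1lt : W1.card < W.card := by
    apply Finset.card_lt_card
    rw [Finset.ssubset_iff_of_subset hW1W]
    exact ⟨r, hr, hrW1⟩
  -- recursive run on W1
  have hdisj1 : ∀ x ∈ W1, x ∉ P := fun x hx => hdisj x (hW1W hx)
  have hclose1 : ∀ v ∈ W1, v ≠ s → T.parent v ∈ W1 :=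
    fun v hv hvs => (parent_mem_subW hclose hreach hv hvs).1
  have hreach1 : ∀ v ∈ W1, ∃ j, T.parent^[j] v = s :=
    fun v hv => ⟨_, (mem_subW.1 hv).2⟩
  have hcover1 : ∀ v ∈ W1, ∀ u : V, u ≠ v → T.parent u = v → u ∈ W1 ∨ u ∈ P := by
    intro v hv u hu hp
    rcases hcover v (hW1W hv) u hu hp with h | h
    · exact Or.inl (child_mem_subW htree hclose hreach hv h hu hp).1
    · exact Or.inr h
  obtain ⟨L1, h1, hc1, hl1⟩ :=
    IH W1.card (lt_of_lt_of_le hW1lt hcard) (K-1) V T W1 s P htree hdeg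
      le_rfl hsW1 hdisj1 hclose1 hreach1 hcover1
  -- recursive run on W' = W \ W1
  set W' := W \ W1 with hW'def
  have hcard' : W'.card = W.card - W1.card := Finset.card_sdiff_of_subset hW1W
  have hrW' : r ∈ W' := Finset.mem_sdiff.2 ⟨hr, hrW1⟩
  have hdisj' : ∀ x ∈ W', x ∉ insert s P := by
    intro x hx hc
    obtain ⟨hxW, hxW1⟩ := Finset.mem_sdiff.1 hx
    rcases Finset.mem_insert.1 hc with rfl | hc
    · exact hxW1 hsW1
    · exact hdisj x hxW hc
  have hnp : ∀ v ∈ W, v ≠ r → T.parent v ≠ v := by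
    intro v hv hvr hc
    obtain ⟨j, hj⟩ := hreach v hv
    rw [Function.iterate_fixed hc j] at hj
    exact hvr hj
  have hclose' : ∀ v ∈ W', v ≠ r → T.parent v ∈ W' := by
    intro v hv hvr
    obtain ⟨hvW, hvW1⟩ := Finset.mem_sdiff.1 hv
    have hpW : T.parent v ∈ W := hclose v hvW hvr
    refine Finset.mem_sdiff.2 ⟨hpW, fun hc => ?_⟩
    exact hvW1 (child_mem_subW htree hclose hreach hc hvW ((hnp v hvW hvr).symm) rfl).1
  have hreach' : ∀ v ∈ W', ∃ j, T.parent^[j] v = r :=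
    fun v hv => hreach v (Finset.mem_sdiff.1 hv).1
  have hcover' : ∀ v ∈ W', ∀ u : V, u ≠ v → T.parent u = v → u ∈ W' ∨ u ∈ insert s P := by
    intro v hv u hu hp
    obtain ⟨hvW, hvW1⟩ := Finset.mem_sdiff.1 hv
    rcases hcover v hvW u hu hp with h | h
    · by_cases huW1 : u ∈ W1
      · by_cases hus : u = s
        · exact Or.inr (hus ▸ Finset.mem_insert_self _ _)
        · exact absurd (hp ▸ (parent_mem_subW hclose hreach huW1 hus).1) hvW1
      · exact Or.inl (Finset.mem_sdiff.2 ⟨h, huW1⟩)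
    · exact Or.inr (Finset.mem_insert_of_mem h)
  have hW1pos : 1 ≤ W1.card := Finset.card_pos.2 ⟨s, hsW1⟩
  have hW'lt : W'.card < W.card := by omega
  obtain ⟨L2, h2, hc2, hl2⟩ :=
    IH W'.card (lt_of_lt_of_le hW'lt hcard) K V T W' r (insert s P) htree hdeg
      le_rfl hrW' hdisj' hclose' hreach' hcover'
  have hc2' : ∀ R ∈ L2, insert s P ⊆ R ∧ R ⊆ W ∪ insert s P ∧
      (R \ insert s P).card ≤ (d+2)*K*m + W'.card / m^(K-1) + 1 := by
    intro R hR
    obtain ⟨hp, hw, hb⟩ := hc2 R hR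
    exact ⟨hp, hw.trans (Finset.union_subset_union_left (Finset.sdiff_subset)), hb⟩
  obtain ⟨L, hL, hcL, hlen⟩ :=
    glue_run hW1W hr hrW1 (hdisj r hr) hsW h1 h2 hc1 hc2'
  have hq : 0 < m^(K-1) := Nat.pow_pos hm
  have hW1big : m^(K-1) ≤ W1.card := by omega
  have hWcd : W1.card ≤ W.card := Finset.card_le_card hW1W
  -- key division facts
  have hdiv2 : W'.card / m^(K-1) + 1 ≤ W.card / m^(K-1) := by
    have hsum : W'.card + m^(K-1) ≤ W.card := by omega
    calc W'.card / m^(K-1) + 1 = (W'.card + m^(K-1)) / m^(K-1) :=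
          (Nat.add_div_right _ hq).symm
      _ ≤ W.card / m^(K-1) := Nat.div_le_div_right hsum
  refine ⟨L, hL, ?_, ?_⟩
  · intro R hR
    obtain ⟨hp, hw, hb⟩ := hcL R hR
    refine ⟨hp, hw, le_trans hb ?_⟩
    rw [max_le_iff]
    constructor
    · cases K with
      | zero =>
        have hmm : m ^ (0-1) - 1 = 0 := by simp
        have h1 : W1.card ≤ 1 := by rw [hmm] at hθ2; omega
        have hbig' : 1 < W.card := by rw [hmm] at hbig; omega
        simp only [Nat.zero_sub, pow_zero, Nat.div_one, Nat.mul_zero, Nat.zero_mul]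
        omega
      | succ k =>
        have hW1le : W1.card ≤ d * m^k + 1 := by
          have h2' : d * (m^(k+1-1) - 1) ≤ d * m^k := by
            apply Nat.mul_le_mul_left
            simp only [Nat.add_sub_cancel]
            exact Nat.sub_le _ _
          omega
        have hdiv1 : W1.card / m^(k-1) ≤ d*m + 1 := div_bound hm hW1le
        have hexp : (d+2)*(k+1)*m = (d+2)*k*m + d*m + 2*m := by ring
        have hone : 1 ≤ W.card / m^k := by
          rw [Nat.one_le_div_iff (Nat.pow_pos hm)]
          have h3 := Nat.le_mul_of_pos_left (m^(k+1-1) - 1) hd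
          have h4 : m ^ (k+1-1) = m ^ k := by simp
          rw [h4] at h3 hbig
          have h5 : 1 ≤ m ^ k := Nat.pow_pos hm
          omega
        simp only [Nat.add_sub_cancel]
        omega
    · omega
  · -- length
    cases K with
    | zero =>
      have hmm : m ^ (0-1) - 1 = 0 := by simp
      have hW11 : W1.card = 1 := by rw [hmm] at hθ2; omega
      simp only [Nat.zero_sub, pow_zero, Nat.mul_one] at hl1 hl2 ⊢
      rw [hW11] at hl1
      omega
    | succ k =>
      simp only [Nat.add_sub_cancel] at hl1
      have e1 : W1.card + W'.card = W.card := by omega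
      have hstep : L1.length + L2.length + L1.length ≤
          2 * 2^(k+1) * W.card := by
        calc L1.length + L2.length + L1.length
            ≤ (2 * 2^k * W1.card) + (2 * 2^(k+1) * W'.card) + (2 * 2^k * W1.card) :=
              add_le_add (add_le_add hl1 hl2) hl1
          _ = 2 * 2^(k+1) * (W1.card + W'.card) := by rw [pow_succ]; ring
          _ = 2 * 2^(k+1) * W.card := by rw [e1]
      omega

theorem main_all (d m : ℕ) (hd : 0 < d) (hm : 1 ≤ m) :
    ∀ n k : ℕ, MainStmt d m k n := by
  intro n
  induction n using Nat.strong_induction_on with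
  | _ n IH =>
  intro k
  induction k with
  | zero =>
    intro V _ _ T W r P htree hdeg hcard hr hdisj hclose hreach hcover
    by_cases hone : W.card = 1
    · obtain ⟨L, hL, hc, hl⟩ := base_run hr hdisj hcover hone
      refine ⟨L, hL, fun R hR => ?_, by omega⟩
      obtain ⟨hp, hw, hb⟩ := hc R hR
      exact ⟨hp, hw, le_trans hb (Nat.le_add_left 1 _)⟩
    · have hbig : d * (m^(0-1) - 1) + 1 < W.card := by
        have : 1 ≤ W.card := Finset.card_pos.2 ⟨r, hr⟩
        simp only [Nat.zero_sub, pow_zero, Nat.sub_self, Nat.mul_zero]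
        omega
      exact split_step d m hd hm 0 n IH V T W r P htree hdeg hcard hr hdisj
        hclose hreach hcover hbig
  | succ k ihk =>
    intro V _ _ T W r P htree hdeg hcard hr hdisj hclose hreach hcover
    by_cases hdef : W.card ≤ d * (m^k - 1) + 1
    · obtain ⟨L, hL, hc, hl⟩ :=
        ihk V T W r P htree hdeg hcard hr hdisj hclose hreach hcover
      refine ⟨L, hL, fun R hR => ?_, by
        have : (2:ℕ) * 2^k * W.card ≤ 2 * 2^(k+1) * W.card := by
          apply Nat.mul_le_mul_right
          apply Nat.mul_le_mul_left
          exact Nat.pow_le_pow_right (by norm_num) (by omega)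
        omega⟩
      obtain ⟨hp, hw, hb⟩ := hc R hR
      refine ⟨hp, hw, le_trans hb ?_⟩
      have hWle : W.card ≤ d * m^k + 1 := by
        have : d * (m^k - 1) ≤ d * m^k := Nat.mul_le_mul_left d (Nat.sub_le _ _)
        omega
      have hdb : W.card / m^(k-1) ≤ d*m + 1 := div_bound hm hWle
      have hexp : (d+2)*(k+1)*m = (d+2)*k*m + d*m + 2*m := by ring
      simp only [Nat.add_sub_cancel]
      linarith [Nat.zero_le (W.card / m^k), hdb, hexp, hm]
    · push_neg at hdef
      have hbig : d * (m^(k+1-1) - 1) + 1 < W.card := by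
        simpa using hdef
      exact split_step d m hd hm (k+1) n IH V T W r P htree hdeg hcard hr hdisj
        hclose hreach hcover hbig

theorem pebSpace_le {L : List (Finset V)} {s : ℕ} (h : ∀ R ∈ L, R.card ≤ s) :
    pebSpace L ≤ s := by
  induction L with
  | nil => simp [pebSpace]
  | cons a l ih =>
    simp only [pebSpace, List.map_cons, List.foldr_cons]
    exact max_le (h a (by simp)) (ih fun R hR => h R (by simp [hR]))

end PebAux

/-- For all positive integers `k` and `d` there is a
constant `C > 0` such that every rooted directed tree on `n` vertices whose
underlying undirected tree has maximum degree at most `d` admits a reversible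
pebbling using at most `C · n ^ (1/k)` pebbles and at most `C · n` steps. -/
theorem bounded_degree_tree_time_space_tradeoff (k d : ℕ) (hk : 0 < k) (hd : 0 < d) :
    ∃ C : ℝ, 0 < C ∧
      ∀ (V : Type) [Fintype V] [DecidableEq V] (T : PebSys V),
        IsRDTree T →
        (∀ v : V, ((undirG T).neighborSet v).ncard ≤ d) →
        ∃ L : List (Finset V), IsPebbling T L ∧
          (pebSpace L : ℝ) ≤ C * (Fintype.card V : ℝ) ^ (1 / (k : ℝ)) ∧
          (L.length : ℝ) ≤ C * (Fintype.card V : ℝ) := by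
  classical
  set K : ℕ := (d+2)*k + 2 with hK
  set C : ℕ := 2*K + 2^(k+1) with hC
  refine ⟨(C : ℝ), by positivity, ?_⟩
  intro V _ _ T htree hdeg
  have hne : Nonempty V := ⟨T.root⟩
  set n : ℕ := Fintype.card V with hn
  have hn1 : 1 ≤ n := Fintype.card_pos
  set x : ℝ := (n : ℝ) ^ (1 / (k : ℝ)) with hxdef
  have hnr : (1:ℝ) ≤ (n:ℝ) := by exact_mod_cast hn1
  have hek : (0:ℝ) ≤ 1 / (k:ℝ) := by positivity
  have hx1 : 1 ≤ x := by
    rw [hxdef]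
    conv_lhs => rw [← Real.one_rpow (1 / (k : ℝ))]
    exact Real.rpow_le_rpow zero_le_one hnr hek
  have hx0 : 0 ≤ x := by linarith
  set m : ℕ := ⌈x⌉₊ with hmdef
  have hm1 : 1 ≤ m := Nat.one_le_ceil_iff.2 (by linarith)
  have hmx : (m : ℝ) ≤ 2 * x := by
    have h1 : (m : ℝ) < x + 1 := Nat.ceil_lt_add_one hx0
    linarith
  have hnm : n ≤ m ^ k := by
    have hxm : x ≤ (m : ℝ) := Nat.le_ceil x
    have h1 : (n : ℝ) = x ^ k := by
      rw [hxdef, one_div]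
      exact (Real.rpow_inv_natCast_pow (by positivity) (by omega)).symm
    have h2 : x ^ k ≤ (m : ℝ) ^ k := pow_le_pow_left₀ hx0 hxm k
    have h3 : (n : ℝ) ≤ ((m ^ k : ℕ) : ℝ) := by
      push_cast
      rw [h1] at *
      linarith
    exact_mod_cast h3
  have hdeg' : ∀ v : V,
      (Finset.univ.filter (fun u => u ≠ v ∧ T.parent u = v)).card ≤ d := by
    intro v
    have hsub : ((Finset.univ.filter (fun u => u ≠ v ∧ T.parent u = v) : Finset V) : Set V)
        ⊆ (undirG T).neighborSet v := by
      intro u hu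
      simp only [Finset.coe_filter, Set.mem_setOf_eq, Finset.mem_univ, true_and] at hu
      obtain ⟨h1, h2⟩ := hu
      show (undirG T).Adj v u
      rw [undirG, SimpleGraph.fromRel_adj]
      exact ⟨h1.symm, Or.inr h2⟩
    calc (Finset.univ.filter (fun u => u ≠ v ∧ T.parent u = v)).card
        = ((Finset.univ.filter (fun u => u ≠ v ∧ T.parent u = v) : Finset V) : Set V).ncard :=
          (Set.ncard_coe_finset _).symm
      _ ≤ ((undirG T).neighborSet v).ncard := Set.ncard_le_ncard hsub (Set.toFinite _)
      _ ≤ d := hdeg v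
  obtain ⟨L, ⟨hhead, hlast, hchain⟩, hc, hlen⟩ :=
    PebAux.main_all d m hd hm1 n k V T Finset.univ T.root ∅ htree hdeg'
      (le_of_eq (Finset.card_univ)) (Finset.mem_univ _)
      (fun x _ hx => (Finset.notMem_empty x) hx)
      (fun v _ _ => Finset.mem_univ _)
      (fun v _ => htree.2 v)
      (fun v _ u _ _ => Or.inl (Finset.mem_univ u))
  refine ⟨L, ⟨hhead, by simpa using hlast, hchain⟩, ?_, ?_⟩
  · -- space bound
    have hdivm : n / m ^ (k-1) ≤ m := by
      have h1 : n / m ^ (k-1) ≤ m ^ k / m ^ (k-1) := Nat.div_le_div_right hnm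
      have h2 : m ^ k / m ^ (k-1) = m ^ (k - (k-1)) :=
        Nat.pow_div (Nat.sub_le _ _) hm1
      have h3 : k - (k-1) = 1 := by omega
      rw [h2, h3, pow_one] at h1
      exact h1
    have hsp : pebSpace L ≤ K * m := by
      apply PebAux.pebSpace_le
      intro R hR
      obtain ⟨-, -, hb⟩ := hc R hR
      rw [Finset.sdiff_empty] at hb
      have hcu : (Finset.univ : Finset V).card = n := Finset.card_univ
      rw [hcu] at hb
      have hKm : K * m = (d+2)*k*m + 2*m := by rw [hK]; ring
      have hmm : 1 ≤ m := hm1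
      have hm2 : m + 1 ≤ 2*m := by omega
      calc R.card ≤ (d+2)*k*m + n / m^(k-1) + 1 := hb
        _ = (d+2)*k*m + (n / m^(k-1) + 1) := by ring
        _ ≤ (d+2)*k*m + (m + 1) := Nat.add_le_add_left (Nat.add_le_add_right hdivm 1) _
        _ ≤ (d+2)*k*m + 2*m := Nat.add_le_add_left hm2 _
        _ = K * m := hKm.symm
    calc (pebSpace L : ℝ) ≤ (K : ℝ) * (m : ℝ) := by exact_mod_cast hsp
      _ ≤ (K : ℝ) * (2 * x) := by
          apply mul_le_mul_of_nonneg_left hmx (by positivity)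
      _ = (2 * K : ℕ) * x := by push_cast; ring
      _ ≤ (C : ℝ) * x := by
          apply mul_le_mul_of_nonneg_right ?_ hx0
          have : (2*K : ℕ) ≤ C := by rw [hC]; exact Nat.le_add_right _ _
          exact_mod_cast this
      _ = (C : ℝ) * (n : ℝ) ^ (1 / (k : ℝ)) := by rw [hxdef]
  · -- time bound
    have h1 : L.length ≤ 2 * 2^k * n := by
      have := hlen
      rwa [Finset.card_univ] at this
    have h2 : 2 * 2^k ≤ C := by
      rw [hC, pow_succ, Nat.mul_comm 2 (2^k)]
      exact Nat.le_add_left _ _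
    have h3 : L.length ≤ C * n := le_trans h1 (Nat.mul_le_mul_right n h2)
    calc (L.length : ℝ) ≤ ((C * n : ℕ) : ℝ) := by exact_mod_cast h3
      _ = (C : ℝ) * (n : ℝ) := by push_cast; ring
end

section
/- Every finite undirected tree T' with n' vertices can be divided into two subtrees by removing a single edge such that, if Δ is the maximum degree of T', the larger of the two resulting subtrees has at least ⌊n'/2⌋ and at most ⌈n' · Δ/(Δ + 1)⌉ vertices; consequently, for every positive real m, any tree T' with maximum degree Δ and more than m vertices contains a subtree T'' (a connected subgraph obtained by iterating this splitting and keeping the larger part) whose number of vertices is at least ⌊m/2⌋ and at most ⌈m⌉. -/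
open SimpleGraph

variable {V : Type}

private def Rset (G : SimpleGraph V) (x y : V) : Set V :=
  {v | (G.deleteEdges {s(x, y)}).Reachable x v}

private lemma Rset_swap (G : SimpleGraph V) (a b : V) :
    Rset G b a = {v | (G.deleteEdges {s(a, b)}).Reachable b v} := by
  unfold Rset
  rw [Sym2.eq_swap]

private lemma reach_del_iff {G : SimpleGraph V} {e : Sym2 V} {x y : V} :
    (G.deleteEdges {e}).Reachable x y ↔ ∃ p : G.Walk x y, e ∉ p.edges := by
  constructor
  · rintro ⟨p⟩
    refine ⟨p.map (Hom.ofLE (G.deleteEdges_le _)), ?_⟩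
    rw [Walk.edges_map]
    simp only [List.mem_map, Hom.ofLE_apply, Sym2.map_id', id]
    rintro ⟨e', h, rfl⟩
    have := p.edges_subset_edgeSet h
    rw [edgeSet_deleteEdges] at this
    exact this.2 rfl
  · rintro ⟨p, h⟩
    refine ⟨p.transfer _ fun e' he' => ?_⟩
    rw [edgeSet_deleteEdges]
    exact ⟨p.edges_subset_edgeSet he', by rintro rfl; exact h he'⟩

private lemma reach_del_or3 {G : SimpleGraph V} (a b : V) : ∀ {u v : V} (_ : G.Walk u v),
    (G.deleteEdges {s(a, b)}).Reachable u v ∨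
    ((G.deleteEdges {s(a, b)}).Reachable u a ∧ (G.deleteEdges {s(a, b)}).Reachable b v) ∨
    ((G.deleteEdges {s(a, b)}).Reachable u b ∧ (G.deleteEdges {s(a, b)}).Reachable a v) := by
  intro u v p
  induction p with
  | nil => exact Or.inl (Reachable.refl _)
  | @cons u x _ h q ih =>
    by_cases he : s(u, x) = s(a, b)
    · rw [Sym2.eq_iff] at he
      rcases he with ⟨rfl, rfl⟩ | ⟨rfl, rfl⟩
      · rcases ih with h1 | ⟨h1, h2⟩ | ⟨h1, h2⟩
        · exact Or.inr (Or.inl ⟨Reachable.refl _, h1⟩)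
        · exact Or.inr (Or.inl ⟨Reachable.refl _, h2⟩)
        · exact Or.inl h2
      · rcases ih with h1 | ⟨h1, h2⟩ | ⟨h1, h2⟩
        · exact Or.inr (Or.inr ⟨Reachable.refl _, h1⟩)
        · exact Or.inl h2
        · exact Or.inr (Or.inr ⟨Reachable.refl _, h2⟩)
    · have hadj : (G.deleteEdges {s(a, b)}).Adj u x := by
        rw [deleteEdges_adj]
        exact ⟨h, by simpa using he⟩
      rcases ih with h1 | ⟨h1, h2⟩ | ⟨h1, h2⟩
      · exact Or.inl (hadj.reachable.trans h1)
      · exact Or.inr (Or.inl ⟨hadj.reachable.trans h1, h2⟩)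
      · exact Or.inr (Or.inr ⟨hadj.reachable.trans h1, h2⟩)

private lemma reach_del_or {G : SimpleGraph V} (a b : V) {v : V} (p : G.Walk v a) :
    (G.deleteEdges {s(a, b)}).Reachable a v ∨ (G.deleteEdges {s(a, b)}).Reachable b v := by
  rcases reach_del_or3 a b p with h1 | ⟨h1, _⟩ | ⟨h1, h2⟩
  · exact Or.inl h1.symm
  · exact Or.inl h1.symm
  · exact Or.inr h1.symm

private lemma tree_bridge {G : SimpleGraph V} (hT : G.IsTree) {a b : V} (hab : G.Adj a b) :
    ¬ (G.deleteEdges {s(a, b)}).Reachable a b := by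
  have h := (isAcyclic_iff_forall_adj_isBridge.mp hT.IsAcyclic) hab
  rw [isBridge_iff] at h
  exact h

private lemma Rset_partition [Fintype V] {G : SimpleGraph V} (hT : G.IsTree) {a b : V}
    (hab : G.Adj a b) :
    (Rset G a b).ncard + (Rset G b a).ncard = Fintype.card V := by
  have hdisj : Disjoint (Rset G a b) (Rset G b a) := by
    rw [Set.disjoint_left]
    rintro v h1 h2
    rw [Rset_swap G a b] at h2
    exact tree_bridge hT hab (h1.trans h2.symm)
  have huniv : Rset G a b ∪ Rset G b a = Set.univ := by
    ext v
    simp only [Set.mem_union, Set.mem_univ, iff_true]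
    rw [Rset_swap G a b]
    obtain ⟨p⟩ := hT.isConnected.preconnected v a
    exact reach_del_or a b p
  rw [← Set.ncard_union_eq hdisj (Set.toFinite _) (Set.toFinite _), huniv, Set.ncard_univ, Nat.card_eq_fintype_card]

private lemma key_subset [DecidableEq V] {G : SimpleGraph V} (hT : G.IsTree) {a b c : V} (hab : G.Adj a b)
    (hac : G.Adj a c) (hcb : c ≠ b) :
    Rset G c a ⊆ Rset G a b \ {a} := by
  intro v hv
  have hca : G.Adj c a := hac.symm
  obtain ⟨p, hp⟩ := reach_del_iff.mp hv
  have hqp : p.bypass.IsPath := p.bypass_isPath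
  have hqe : s(c, a) ∉ p.bypass.edges := fun h => hp (p.edges_bypass_subset h)
  have ha : a ∉ p.bypass.support := by
    intro ha
    have hpath : (p.bypass.takeUntil a ha).IsPath := hqp.takeUntil ha
    have huniq := hT.IsAcyclic.path_unique ⟨p.bypass.takeUntil a ha, hpath⟩ (Path.singleton hca)
    have he : s(c, a) ∈ (p.bypass.takeUntil a ha).edges := by
      have heq : (p.bypass.takeUntil a ha) = (Path.singleton hca).val :=
        congrArg Subtype.val huniq
      rw [heq]
      simp [Path.singleton]
    exact hqe (p.bypass.edges_takeUntil_subset ha he)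
  have hb : s(a, b) ∉ p.bypass.edges := fun h => ha (p.bypass.fst_mem_support_of_mem_edges h)
  have h1 : (G.deleteEdges {s(a, b)}).Reachable c v := reach_del_iff.mpr ⟨p.bypass, hb⟩
  have h2 : (G.deleteEdges {s(a, b)}).Adj a c := by
    rw [deleteEdges_adj]
    refine ⟨hac, ?_⟩
    simp only [Set.mem_singleton_iff, Sym2.eq_iff]
    push_neg
    exact ⟨fun _ => hcb, fun h _ => hab.ne h⟩
  refine ⟨h2.reachable.trans h1, ?_⟩
  simp only [Set.mem_singleton_iff]
  rintro rfl
  exact tree_bridge hT hca hv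

private lemma cover [Fintype V] [DecidableEq V] {G : SimpleGraph V} [DecidableRel G.Adj]
    {a b : V} :
    Rset G a b ⊆ insert a (⋃ c ∈ (G.neighborFinset a).erase b, Rset G c a) := by
  intro v hv
  obtain ⟨p0⟩ := hv
  obtain ⟨q, hqp⟩ : ∃ q : (G.deleteEdges {s(a, b)}).Walk a v, q.IsPath :=
    ⟨p0.bypass, p0.bypass_isPath⟩
  cases q with
  | nil => exact Set.mem_insert _ _
  | @cons _ c _ h' q' =>
    have hgac := (deleteEdges_adj).mp h'
    have hcb : c ≠ b := by
      rintro rfl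
      exact hgac.2 rfl
    have hnotsup : a ∉ q'.support := ((Walk.cons_isPath_iff _ _).mp hqp).2
    set q'' := q'.map (Hom.ofLE (G.deleteEdges_le _)) with hq''
    have hce : s(c, a) ∉ q''.edges := by
      intro h
      rw [hq'', Walk.edges_map] at h
      simp only [List.mem_map, Hom.ofLE_apply, Sym2.map_id', id] at h
      obtain ⟨e', he', rfl⟩ := h
      exact hnotsup (q'.snd_mem_support_of_mem_edges he')
    refine Set.mem_insert_iff.mpr (Or.inr ?_)
    rw [Set.mem_iUnion₂]
    refine ⟨c, ?_, reach_del_iff.mpr ⟨q'', hce⟩⟩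
    rw [Finset.mem_erase, mem_neighborFinset]
    exact ⟨hcb, hgac.1⟩

private lemma ncard_biUnion_le [Fintype V] {β : Type} [DecidableEq β] (s : Finset β)
    (f : β → Set V) :
    (⋃ c ∈ s, f c).ncard ≤ ∑ c ∈ s, (f c).ncard := by
  induction s using Finset.induction_on with
  | empty => simp
  | @insert x s hx ih =>
    rw [Finset.set_biUnion_insert, Finset.sum_insert hx]
    exact (Set.ncard_union_le _ _).trans (by omega)

private lemma main_bound [Fintype V] {G : SimpleGraph V} [DecidableRel G.Adj] (hT : G.IsTree)
    (hcard : 2 ≤ Fintype.card V) {a b : V} (hab : G.Adj a b)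
    (hmin : ∀ x y : V, G.Adj x y →
      (Rset G a b).ncard ≤ max (Rset G x y).ncard (Rset G y x).ncard) :
    (Rset G a b).ncard ≤ ⌈((Fintype.card V : ℚ) * G.maxDegree) / (G.maxDegree + 1)⌉₊ := by
  classical
  set n := Fintype.card V with hn
  set L := (Rset G a b).ncard with hLdef
  set D := G.maxDegree with hD
  have hne : Nonempty V := Fintype.card_pos_iff.mp (by omega)
  have hDn : D + 1 ≤ n := G.maxDegree_lt_card_verts
  have hD1 : 1 ≤ D := by
    have h1 : 0 < G.degree a := by
      rw [G.degree_pos_iff_exists_adj]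
      exact ⟨b, hab⟩
    exact le_trans h1 (G.degree_le_maxDegree a)
  have haL : a ∈ Rset G a b := Reachable.refl _
  have hL1 : 0 < L := by
    rw [hLdef, Set.ncard_pos (Set.toFinite _)]
    exact ⟨a, haL⟩
  have hpart := Rset_partition hT hab
  have hB1 : 0 < (Rset G b a).ncard := by
    rw [Set.ncard_pos (Set.toFinite _)]
    exact ⟨b, Reachable.refl _⟩
  have hLn : L + 1 ≤ n := by omega
  have hterm : ∀ c ∈ (G.neighborFinset a).erase b, (Rset G c a).ncard ≤ n - L := by
    intro c hc
    rw [Finset.mem_erase, mem_neighborFinset] at hc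
    obtain ⟨hcb, hac⟩ := hc
    have hlt : (Rset G c a).ncard < L := by
      have h1 : (Rset G c a).ncard ≤ (Rset G a b \ {a}).ncard :=
        Set.ncard_le_ncard (key_subset hT hab hac hcb) (Set.toFinite _)
      have h2 : (Rset G a b \ {a}).ncard = L - 1 :=
        Set.ncard_diff_singleton_of_mem haL
      omega
    have hmax := hmin a c hac
    have hpart2 := Rset_partition hT hac
    rcases le_or_gt L (Rset G a c).ncard with h | h
    · omega
    · have hlt2 : max (Rset G a c).ncard (Rset G c a).ncard < L := max_lt h hlt
      omega
  have hcount : L ≤ 1 + ((G.neighborFinset a).erase b).card * (n - L) := by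
    calc L ≤ (insert a (⋃ c ∈ (G.neighborFinset a).erase b, Rset G c a)).ncard :=
          Set.ncard_le_ncard cover (Set.toFinite _)
      _ ≤ (⋃ c ∈ (G.neighborFinset a).erase b, Rset G c a).ncard + 1 :=
          Set.ncard_insert_le _ _
      _ ≤ (∑ c ∈ (G.neighborFinset a).erase b, (Rset G c a).ncard) + 1 := by
          have := ncard_biUnion_le ((G.neighborFinset a).erase b) (fun c => Rset G c a)
          omega
      _ ≤ (∑ _c ∈ (G.neighborFinset a).erase b, (n - L)) + 1 := by
          have := Finset.sum_le_sum hterm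
          omega
      _ = 1 + ((G.neighborFinset a).erase b).card * (n - L) := by
          rw [Finset.sum_const, smul_eq_mul]
          omega
  have hdeg : ((G.neighborFinset a).erase b).card ≤ D - 1 := by
    rw [Finset.card_erase_of_mem (by rwa [mem_neighborFinset])]
    have h1 : G.degree a ≤ D := G.degree_le_maxDegree a
    have h2 : (G.neighborFinset a).card = G.degree a := rfl
    omega
  have h1 : L ≤ 1 + (D - 1) * (n - L) :=
    hcount.trans (by
      have := Nat.mul_le_mul_right (n - L) hdeg
      omega)
  have hq : (L : ℚ) ≤ ((n : ℚ) * D) / ((D : ℚ) + 1) := by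
    rw [le_div_iff₀ (by positivity)]
    have hLn' : L ≤ n := by omega
    have h1' : (L : ℚ) ≤ 1 + ((D : ℚ) - 1) * ((n : ℚ) - L) := by
      have h := h1
      qify [hD1, hLn'] at h
      exact h
    have hDn' : (D : ℚ) + 1 ≤ (n : ℚ) := by exact_mod_cast hDn
    have hLn'' : (L : ℚ) + 1 ≤ (n : ℚ) := by exact_mod_cast hLn
    nlinarith [h1', hDn', hLn'']
  calc L = ⌈(L : ℚ)⌉₊ := (Nat.ceil_natCast L).symm
    _ ≤ _ := Nat.ceil_mono hq

private lemma part1_case [Fintype V] {G : SimpleGraph V} [DecidableRel G.Adj] (hT : G.IsTree)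
    (hcard : 2 ≤ Fintype.card V) {a b : V} (hab : G.Adj a b)
    (hord : (Rset G b a).ncard ≤ (Rset G a b).ncard)
    (hmin : ∀ x y : V, G.Adj x y →
      (Rset G a b).ncard ≤ max (Rset G x y).ncard (Rset G y x).ncard) :
    Fintype.card V / 2 ≤ max (Rset G a b).ncard (Rset G b a).ncard ∧
    max (Rset G a b).ncard (Rset G b a).ncard ≤
      ⌈((Fintype.card V : ℚ) * G.maxDegree) / (G.maxDegree + 1)⌉₊ := by
  rw [max_eq_left hord]
  have hpart := Rset_partition hT hab
  exact ⟨by omega, main_bound hT hcard hab hmin⟩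

private lemma cross {G : SimpleGraph V} {S : Set V} : ∀ {x y : V}, G.Walk x y → x ∈ S → y ∉ S →
    ∃ u v, u ∈ S ∧ v ∉ S ∧ G.Adj u v := by
  intro x y p
  induction p with
  | nil => exact fun h h' => absurd h h'
  | @cons x c _ h q ih =>
    intro hx hy
    by_cases hc : c ∈ S
    · exact ih hc hy
    · exact ⟨x, c, hx, hc, h⟩

private lemma grow [Fintype V] {G : SimpleGraph V} (hG : G.Connected) :
    ∀ k : ℕ, 1 ≤ k → k ≤ Fintype.card V →
      ∃ S : Set V, (G.induce S).Connected ∧ S.ncard = k := by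
  intro k
  induction k with
  | zero => omega
  | succ k ih =>
    intro _ hk
    by_cases hk0 : k = 0
    · subst hk0
      obtain ⟨v⟩ := hG.nonempty
      refine ⟨{v}, ?_, by simp⟩
      rw [connected_iff]
      refine ⟨fun x y => ?_, ⟨⟨v, rfl⟩⟩⟩
      have hxy : x = y := Subtype.ext (x.2.trans y.2.symm)
      rw [hxy]
    · obtain ⟨S, hS, hcard⟩ := ih (by omega) (by omega)
      have hSne : S.Nonempty := Set.nonempty_of_ncard_ne_zero (by omega)
      obtain ⟨y, hy⟩ : ∃ y, y ∉ S := by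
        by_contra h
        push_neg at h
        have : S = Set.univ := Set.eq_univ_of_forall h
        rw [this, Set.ncard_univ, Nat.card_eq_fintype_card] at hcard
        omega
      obtain ⟨x, hx⟩ := hSne
      obtain ⟨p⟩ := hG.preconnected x y
      obtain ⟨u, w, hu, hw, huw⟩ := cross p hx hy
      have hmem : ∀ z ∈ S, z ∈ insert w S := fun z hz => Set.mem_insert_of_mem _ hz
      let f : G.induce S →g G.induce (insert w S) :=
        ⟨fun z => ⟨z.1, hmem z.1 z.2⟩, fun {p q} hpq => by
          simp only [comap_adj, Function.Embedding.coe_subtype] at hpq ⊢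
          exact hpq⟩
      have hreach : ∀ z : (insert w S : Set V),
          (G.induce (insert w S)).Reachable z ⟨u, hmem u hu⟩ := by
        rintro ⟨z, hz⟩
        rcases Set.mem_insert_iff.mp hz with hzw | hzS
        · have hadj : (G.induce (insert w S)).Adj ⟨z, hz⟩ ⟨u, hmem u hu⟩ := by
            simp only [comap_adj, Function.Embedding.coe_subtype]
            rw [hzw]
            exact huw.symm
          exact hadj.reachable
        · have h0 : (G.induce S).Reachable ⟨z, hzS⟩ ⟨u, hu⟩ := hS.preconnected _ _
          exact h0.map f
      refine ⟨insert w S, ?_, ?_⟩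
      · rw [connected_iff]
        exact ⟨fun p q => (hreach p).trans (hreach q).symm, ⟨⟨u, hmem u hu⟩⟩⟩
      rw [Set.ncard_insert_of_notMem hw (Set.toFinite _), hcard]

/-- Every finite undirected tree on at least two vertices
can be split into two subtrees by removing a single edge so that the larger
side has at least `⌊n'/2⌋` and at most `⌈n' · Δ/(Δ + 1)⌉` vertices (where
`n'` is the number of vertices and `Δ` the maximum degree); consequently, for
every positive real `m`, any tree with maximum degree `Δ` and more than `m`
vertices contains a subtree (connected subgraph) with at least `⌊m/2⌋` and at
most `⌈m⌉` vertices. -/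
theorem tree_edge_separator_and_subtree :
    (∀ (V : Type) [Fintype V] (G : SimpleGraph V) [DecidableRel G.Adj],
      G.IsTree → 2 ≤ Fintype.card V →
      ∃ a b : V, G.Adj a b ∧
        Fintype.card V / 2 ≤
          max {v | (G.deleteEdges {s(a, b)}).Reachable a v}.ncard
              {v | (G.deleteEdges {s(a, b)}).Reachable b v}.ncard ∧
        max {v | (G.deleteEdges {s(a, b)}).Reachable a v}.ncard
            {v | (G.deleteEdges {s(a, b)}).Reachable b v}.ncard ≤
          ⌈((Fintype.card V : ℚ) * G.maxDegree) / (G.maxDegree + 1)⌉₊) ∧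
    (∀ (V : Type) [Fintype V] (G : SimpleGraph V),
      G.IsTree → ∀ m : ℝ, 0 < m → m < Fintype.card V →
      ∃ S : Set V, (G.induce S).Connected ∧
        ⌊m / 2⌋₊ ≤ S.ncard ∧ S.ncard ≤ ⌈m⌉₊) := by
  constructor
  · intro V _ G _ hT hcard
    classical
    obtain ⟨x0, y0, hadj0⟩ : ∃ x y : V, G.Adj x y := by
      obtain ⟨x, y, hne⟩ := Fintype.exists_pair_of_one_lt_card (α := V) (by omega)
      obtain ⟨p⟩ := hT.isConnected.preconnected x y
      cases p with
      | nil => exact absurd rfl hne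
      | cons h _ => exact ⟨_, _, h⟩
    set s : Finset (V × V) := Finset.univ.filter (fun p : V × V => G.Adj p.1 p.2) with hs
    have hsne : s.Nonempty := ⟨(x0, y0), by simp [hs, hadj0]⟩
    obtain ⟨⟨a, b⟩, hmem, hminf⟩ := Finset.exists_min_image s
      (fun p => max (Rset G p.1 p.2).ncard (Rset G p.2 p.1).ncard) hsne
    have hab : G.Adj a b := by simpa [hs] using hmem
    have hmin' : ∀ x y : V, G.Adj x y →
        max (Rset G a b).ncard (Rset G b a).ncard ≤
          max (Rset G x y).ncard (Rset G y x).ncard :=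
      fun x y hxy => hminf (x, y) (by simp [hs, hxy])
    rcases le_total (Rset G b a).ncard (Rset G a b).ncard with hord | hord
    · refine ⟨a, b, hab, ?_⟩
      rw [← Rset_swap G a b]
      exact part1_case hT hcard hab hord
        (fun x y hxy => le_trans (le_max_left _ _) (hmin' x y hxy))
    · refine ⟨b, a, hab.symm, ?_⟩
      rw [← Rset_swap G b a]
      exact part1_case hT hcard hab.symm hord
        (fun x y hxy => le_trans (le_max_right _ _) (hmin' x y hxy))
  · intro V _ G hT m hm hmn
    have h1 : 1 ≤ ⌈m⌉₊ := Nat.ceil_pos.mpr hm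
    have h2 : ⌈m⌉₊ ≤ Fintype.card V := Nat.ceil_le.mpr hmn.le
    obtain ⟨S, hS, hcard⟩ := grow hT.isConnected ⌈m⌉₊ h1 h2
    refine ⟨S, hS, ?_, le_of_eq hcard⟩
    rw [hcard]
    exact le_trans (Nat.floor_mono (by linarith)) (Nat.floor_le_ceil m)
end
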